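/- arXiv:2501.11383 — 3 statements merged into one kernel-verified Lean document; each statement's English description precedes it below -/
import Mathlib

section
/- Let G and H be multigraphs, e1,e2 parallel non-loop edges of G, and f1,f2 parallel non-loop edges of H, such that both G\{e1,e2} and H\{f1,f2} are connected. Then any two of the following three equalities imply the third: T_{G\{e1,e2}} = T_{H\{f1,f2}}, T_{G\e1} = T_{H\f1}, and T_G = T_H. -/
open scoped BigOperators
open MvPolynomial

attribute [local instance] Classical.propDecidable

/-- A multigraph: finite vertex and edge types, each edge has an unordered
pair of endpoints (loops and parallel edges allowed). -/
structure Multigraph where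
  V : Type
  E : Type
  [fintypeV : Fintype V]
  [fintypeE : Fintype E]
  [decEqV : DecidableEq V]
  [decEqE : DecidableEq E]
  ends : E → Sym2 V

attribute [instance] Multigraph.fintypeV Multigraph.fintypeE
  Multigraph.decEqV Multigraph.decEqE

noncomputable instance quotSetoidFintype {α : Type} [Fintype α] (s : Setoid α) :
    Fintype (Quotient s) := by classical exact Quotient.fintype s

noncomputable instance connCompFintype {α : Type} [Fintype α] (G : SimpleGraph α) :
    Fintype G.ConnectedComponent := by
  classical exact Fintype.ofSurjective G.connectedComponentMk fun c => c.exists_rep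

namespace Multigraph

variable (G : Multigraph)

/-- The simple graph induced by a set of edges `A` (parallel edges and loops
do not affect connectivity). -/
def spanning (A : Finset G.E) : SimpleGraph G.V :=
  SimpleGraph.fromRel (fun a b => ∃ e ∈ A, G.ends e = s(a, b))

/-- number of connected components of the spanning subgraph `(V, A)` -/
noncomputable def comps (A : Finset G.E) : ℕ :=
  Nat.card (G.spanning A).ConnectedComponent

/-- rank of an edge subset: `|V| - c(A)` -/
noncomputable def rk (A : Finset G.E) : ℕ :=
  Fintype.card G.V - G.comps A

/-- The Tutte polynomial, as a polynomial in the variables `X 0 = x`, `X 1 = y`. -/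
noncomputable def tutte : MvPolynomial (Fin 2) ℤ :=
  ∑ A : Finset G.E,
    (X 0 - 1) ^ (G.rk Finset.univ - G.rk A) * (X 1 - 1) ^ (A.card - G.rk A)

def Connected : Prop := (G.spanning Finset.univ).Connected

def IsLoop (e : G.E) : Prop := (G.ends e).IsDiag

def IsBridge (e : G.E) : Prop :=
  G.comps (Finset.univ.erase e) ≠ G.comps Finset.univ

noncomputable def numLoops : ℕ := Nat.card {e : G.E // (G.ends e).IsDiag}

/-- delete a set of edges -/
def deleteSet (F : Finset G.E) : Multigraph where
  V := G.V
  E := {e : G.E // e ∉ F}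
  ends := fun e => G.ends e.1

/-- delete one edge -/
def delete (e : G.E) : Multigraph := G.deleteSet {e}

/-- identify vertices along (the equivalence generated by) a relation `r` -/
noncomputable def identify (r : G.V → G.V → Prop) : Multigraph where
  V := Quotient (Relation.EqvGen.setoid r)
  E := G.E
  decEqV := Classical.decEq _
  ends := fun e => (G.ends e).map (Quotient.mk (Relation.EqvGen.setoid r))

/-- contract an edge: delete it and identify its two endpoints -/
noncomputable def contract (e : G.E) : Multigraph :=
  (G.delete e).identify (fun a b => a ∈ G.ends e ∧ b ∈ G.ends e)

/-- the projection of a vertex of `G` to a vertex of `G/e` -/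
noncomputable def cmk (e : G.E) : G.V → (G.contract e).V := fun v => Quotient.mk _ v

/-- restrict to the edges satisfying `P` (all vertices are kept) -/
noncomputable def edgeRestrict (P : G.E → Prop) : Multigraph where
  V := G.V
  E := {e : G.E // P e}
  ends := fun e => G.ends e.1

/-- add new edges indexed by `n` with prescribed endpoints -/
def addEdges (n : Type) [Fintype n] [DecidableEq n] (f : n → Sym2 G.V) :
    Multigraph where
  V := G.V
  E := G.E ⊕ n
  ends := Sum.elim G.ends f

/-- disjoint union -/
def disjUnion (H : Multigraph) : Multigraph where
  V := G.V ⊕ H.V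
  E := G.E ⊕ H.E
  ends := Sum.elim (fun e => (G.ends e).map Sum.inl) (fun e => (H.ends e).map Sum.inr)

/-- the gluing `G(u_1,…,u_k) ⊔ H(w_1,…,w_k)`: disjoint union with `u i`
identified with `w i` for each `i` -/
noncomputable def glue (H : Multigraph) {k : ℕ} (u : Fin k → G.V) (w : Fin k → H.V) :
    Multigraph :=
  (G.disjUnion H).identify
    (fun a b => ∃ i : Fin k, a = Sum.inl (u i) ∧ b = Sum.inr (w i))

/-- projection from `G.V ⊕ H.V` to the vertices of the gluing -/
noncomputable def glueMk (H : Multigraph) {k : ℕ} (u : Fin k → G.V) (w : Fin k → H.V) :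
    G.V ⊕ H.V → (G.glue H u w).V := fun a => Quotient.mk _ a

end Multigraph

/-- `σ` is an isomorphism of multigraphs: a vertex bijection preserving
edge multiplicities between every pair of vertices. -/
def Multigraph.IsIsoMap (G H : Multigraph) (σ : G.V ≃ H.V) : Prop :=
  ∀ p : Sym2 G.V,
    Nat.card {e : G.E // G.ends e = p} = Nat.card {e : H.E // H.ends e = p.map σ}

/-- `G` and `H` are isomorphic multigraphs -/
def Multigraph.Iso (G H : Multigraph) : Prop := ∃ σ : G.V ≃ H.V, G.IsIsoMap H σ

/-- `σ` is an automorphism of `G` -/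
def Multigraph.IsAuto (G : Multigraph) (σ : G.V ≃ G.V) : Prop := G.IsIsoMap G σ

/-- `Q` is a partition of the type `α` -/
def IsPartitionUniv {α : Type} (Q : Finset (Finset α)) : Prop :=
  (∀ B ∈ Q, B.Nonempty) ∧ ∀ i : α, ∃! B, B ∈ Q ∧ i ∈ B

section AuxTutte

namespace MultigraphAux

open Multigraph

set_option linter.unusedSectionVars false

section CompCount

variable {V : Type}

lemma reach_cases {H H' : SimpleGraph V} {u v : V}
    (h : ∀ a b, H'.Adj a b → H.Adj a b ∨ (a = u ∧ b = v) ∨ (a = v ∧ b = u)) :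
    ∀ a b, H'.Reachable a b →
      H.Reachable a b ∨ (H.Reachable a u ∧ H.Reachable v b) ∨
        (H.Reachable a v ∧ H.Reachable u b) := by
  intro a b ⟨w⟩
  induction w with
  | nil => exact Or.inl (SimpleGraph.Reachable.refl _)
  | @cons a c b hadj p IH =>
    rcases h _ _ hadj with hac | ⟨rfl, rfl⟩ | ⟨rfl, rfl⟩
    · rcases IH with h1 | ⟨h1, h2⟩ | ⟨h1, h2⟩
      · exact Or.inl ((SimpleGraph.Adj.reachable hac).trans h1)
      · exact Or.inr (Or.inl ⟨(SimpleGraph.Adj.reachable hac).trans h1, h2⟩)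
      · exact Or.inr (Or.inr ⟨(SimpleGraph.Adj.reachable hac).trans h1, h2⟩)
    · rcases IH with h1 | ⟨h1, h2⟩ | ⟨h1, h2⟩
      · exact Or.inr (Or.inl ⟨SimpleGraph.Reachable.refl _, h1⟩)
      · exact Or.inr (Or.inl ⟨SimpleGraph.Reachable.refl _, h2⟩)
      · exact Or.inl h2
    · rcases IH with h1 | ⟨h1, h2⟩ | ⟨h1, h2⟩
      · exact Or.inr (Or.inr ⟨SimpleGraph.Reachable.refl _, h1⟩)
      · exact Or.inl h2
      · exact Or.inr (Or.inr ⟨SimpleGraph.Reachable.refl _, h2⟩)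

variable [Fintype V]

lemma card_comp_le {H H' : SimpleGraph V} (hle : H ≤ H') {u v : V}
    (h : ∀ a b, H'.Adj a b → H.Adj a b ∨ (a = u ∧ b = v) ∨ (a = v ∧ b = u)) :
    Nat.card H.ConnectedComponent ≤ Nat.card H'.ConnectedComponent + 1 := by
  classical
  let φ : H.ConnectedComponent → H'.ConnectedComponent :=
    SimpleGraph.ConnectedComponent.map (SimpleGraph.Hom.ofLE hle)
  have hinj : Set.InjOn φ {c | c ≠ H.connectedComponentMk u} := by
    intro c1 hc1 c2 hc2 hphi
    induction c1 using SimpleGraph.ConnectedComponent.ind with | _ a =>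
    induction c2 using SimpleGraph.ConnectedComponent.ind with | _ b =>
    simp only [φ, SimpleGraph.ConnectedComponent.map_mk,
      SimpleGraph.ConnectedComponent.eq] at hphi
    have h1 : (SimpleGraph.Hom.ofLE hle) a = a := rfl
    rw [h1] at hphi
    have h2 : (SimpleGraph.Hom.ofLE hle) b = b := rfl
    rw [h2] at hphi
    rcases reach_cases h a b hphi with h1 | ⟨h1, h2⟩ | ⟨h1, h2⟩
    · exact SimpleGraph.ConnectedComponent.sound h1
    · exact absurd (SimpleGraph.ConnectedComponent.sound h1) hc1
    · exact absurd (SimpleGraph.ConnectedComponent.sound h2).symm hc2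
  rw [Nat.card_eq_fintype_card, Nat.card_eq_fintype_card]
  have hmem : H.connectedComponentMk u ∈ (Finset.univ : Finset H.ConnectedComponent) :=
    Finset.mem_univ _
  have hcard : (Finset.univ.erase (H.connectedComponentMk u)).card ≤
      Fintype.card H'.ConnectedComponent := by
    rw [← Finset.card_univ]
    apply Finset.card_le_card_of_injOn φ (fun c _ => Finset.mem_univ _)
    intro c1 hc1 c2 hc2 hc
    exact hinj (Finset.ne_of_mem_erase hc1) (Finset.ne_of_mem_erase hc2) hc
  rw [Finset.card_erase_of_mem hmem, Finset.card_univ] at hcard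
  omega

end CompCount

section Reindex
variable {M : Type*} [AddCommMonoid M] {γ δ : Type}
  [Fintype γ] [DecidableEq γ] [Fintype δ] [DecidableEq δ]

lemma sum_powerset_map
    (emb : δ ↪ γ) (s : Finset γ) (hs : ∀ x, x ∈ s ↔ ∃ d, emb d = x) (g : Finset γ → M) :
    ∑ t ∈ s.powerset, g t = ∑ B : Finset δ, g (B.map emb) := by
  classical
  have key : ∀ t ∈ s.powerset,
      Finset.map emb (Finset.univ.filter (fun d => emb d ∈ t)) = t := by
    intro t ht
    rw [Finset.mem_powerset] at ht
    ext x
    simp only [Finset.mem_map, Finset.mem_filter, Finset.mem_univ, true_and]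
    constructor
    · rintro ⟨d, hd, rfl⟩; exact hd
    · intro hx
      obtain ⟨d, rfl⟩ := (hs x).mp (ht hx)
      exact ⟨d, hx, rfl⟩
  refine Finset.sum_nbij' (i := fun t => Finset.univ.filter (fun d => emb d ∈ t))
    (j := fun B => B.map emb) ?_ ?_ ?_ ?_ ?_
  · intro t _; exact Finset.mem_univ _
  · intro B _
    rw [Finset.mem_powerset]
    intro x hx
    rw [Finset.mem_map] at hx
    obtain ⟨d, _, rfl⟩ := hx
    exact (hs _).mpr ⟨d, rfl⟩
  · exact key
  · intro B _
    ext d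
    simp only [Finset.mem_filter, Finset.mem_univ, true_and, Finset.mem_map']
  · intro t ht
    exact (congrArg g (key t ht)).symm

lemma expand_one (a : γ) (emb : δ ↪ γ)
    (hr : ∀ x, x ∈ Finset.univ \ ({a} : Finset γ) ↔ ∃ d, emb d = x) (g : Finset γ → M) :
    ∑ A : Finset γ, g A =
      ∑ B : Finset δ, (g (B.map emb) + g (insert a (B.map emb))) := by
  classical
  have huniv : (Finset.univ : Finset γ) = insert a (Finset.univ \ {a}) := by
    ext x; by_cases hx : x = a <;> simp [hx]
  have ha : a ∉ Finset.univ \ ({a} : Finset γ) := by simp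
  calc ∑ A : Finset γ, g A = ∑ A ∈ (Finset.univ : Finset γ).powerset, g A := by
        rw [Finset.powerset_univ]
    _ = ∑ t ∈ (Finset.univ \ ({a} : Finset γ)).powerset, g t +
        ∑ t ∈ (Finset.univ \ ({a} : Finset γ)).powerset, g (insert a t) := by
        conv_lhs => rw [huniv]
        rw [Finset.sum_powerset_insert ha]
    _ = ∑ B : Finset δ, (g (B.map emb) + g (insert a (B.map emb))) := by
        rw [sum_powerset_map emb _ hr, sum_powerset_map emb _ hr (fun t => g (insert a t)),
          Finset.sum_add_distrib]

lemma expand_two (a b : γ) (hab : a ≠ b) (emb : δ ↪ γ)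
    (hr : ∀ x, x ∈ Finset.univ \ ({a, b} : Finset γ) ↔ ∃ d, emb d = x) (g : Finset γ → M) :
    ∑ A : Finset γ, g A =
      ∑ B : Finset δ, (g (B.map emb) + g (insert b (B.map emb)) +
        (g (insert a (B.map emb)) + g (insert a (insert b (B.map emb))))) := by
  classical
  set s := Finset.univ \ ({a, b} : Finset γ) with hs
  have huniv : (Finset.univ : Finset γ) = insert a (insert b s) := by
    ext x; by_cases h1 : x = a <;> by_cases h2 : x = b <;> simp [hs, h1, h2]
  have hb : b ∉ s := by simp [hs]
  have ha : a ∉ insert b s := by simp [hs, hab]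
  calc ∑ A : Finset γ, g A = ∑ A ∈ (Finset.univ : Finset γ).powerset, g A := by
        rw [Finset.powerset_univ]
    _ = (∑ t ∈ s.powerset, g t + ∑ t ∈ s.powerset, g (insert b t)) +
        (∑ t ∈ s.powerset, g (insert a t) +
          ∑ t ∈ s.powerset, g (insert a (insert b t))) := by
        conv_lhs => rw [huniv]
        rw [Finset.sum_powerset_insert ha, Finset.sum_powerset_insert hb,
          Finset.sum_powerset_insert hb]
    _ = _ := by
        rw [sum_powerset_map emb _ hr, sum_powerset_map emb _ hr (fun t => g (insert b t)),
          sum_powerset_map emb _ hr (fun t => g (insert a t)),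
          sum_powerset_map emb _ hr (fun t => g (insert a (insert b t))),
          Finset.sum_add_distrib, Finset.sum_add_distrib, Finset.sum_add_distrib]
end Reindex

section GraphLemmas

lemma spanning_congr {G : Multigraph} {A B : Finset G.E}
    (h : ∀ p : Sym2 G.V, (∃ e ∈ A, G.ends e = p) ↔ (∃ e ∈ B, G.ends e = p)) :
    G.spanning A = G.spanning B := by
  unfold Multigraph.spanning
  congr 1
  funext a b
  exact propext (h s(a, b))

lemma spanning_mono {G : Multigraph} {A B : Finset G.E} (h : A ⊆ B) :
    G.spanning A ≤ G.spanning B := by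
  intro a b hab
  rcases hab with ⟨hne, h1 | h1⟩ <;> obtain ⟨e, he, hee⟩ := h1
  · exact ⟨hne, Or.inl ⟨e, h he, hee⟩⟩
  · exact ⟨hne, Or.inr ⟨e, h he, hee⟩⟩

lemma comps_empty (G : Multigraph) : G.comps ∅ = Fintype.card G.V := by
  have hb : G.spanning ∅ = ⊥ := by
    ext a b
    simp [Multigraph.spanning]
  unfold Multigraph.comps
  rw [hb]
  have hbij : Function.Bijective ((⊥ : SimpleGraph G.V).connectedComponentMk) := by
    constructor
    · intro a b hab
      exact SimpleGraph.reachable_bot.mp (SimpleGraph.ConnectedComponent.exact hab)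
    · exact fun c => c.exists_rep
  rw [← Nat.card_eq_fintype_card]
  exact (Nat.card_eq_of_bijective _ hbij).symm

lemma comps_insert_ge (G : Multigraph) (e : G.E) (A : Finset G.E) :
    G.comps A ≤ G.comps (insert e A) + 1 := by
  classical
  obtain ⟨u, v, huv⟩ : ∃ u v, G.ends e = s(u, v) := by
    induction G.ends e using Sym2.ind with | _ x y => exact ⟨x, y, rfl⟩
  apply card_comp_le (spanning_mono (Finset.subset_insert e A))
  intro a b hab
  rcases hab with ⟨hne, h1 | h1⟩ <;> obtain ⟨f, hf, hff⟩ := h1 <;>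
    rcases Finset.mem_insert.mp hf with rfl | hfA
  · rw [huv] at hff
    rcases Sym2.eq_iff.mp hff with ⟨rfl, rfl⟩ | ⟨rfl, rfl⟩
    · exact Or.inr (Or.inl ⟨rfl, rfl⟩)
    · exact Or.inr (Or.inr ⟨rfl, rfl⟩)
  · exact Or.inl ⟨hne, Or.inl ⟨f, hfA, hff⟩⟩
  · rw [huv] at hff
    rcases Sym2.eq_iff.mp hff with ⟨rfl, rfl⟩ | ⟨rfl, rfl⟩
    · exact Or.inr (Or.inr ⟨rfl, rfl⟩)
    · exact Or.inr (Or.inl ⟨rfl, rfl⟩)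
  · exact Or.inl ⟨hne, Or.inr ⟨f, hfA, hff⟩⟩

lemma card_V_le (G : Multigraph) (A : Finset G.E) :
    Fintype.card G.V ≤ G.comps A + A.card := by
  classical
  induction A using Finset.induction_on with
  | empty => simp [comps_empty]
  | @insert e A he IH =>
    have := comps_insert_ge G e A
    rw [Finset.card_insert_of_notMem he]
    omega

lemma comps_eq_one {G : Multigraph} {A : Finset G.E}
    (h : (G.spanning A).Connected) : G.comps A = 1 := by
  unfold Multigraph.comps
  rw [Nat.card_eq_one_iff_unique]
  constructor
  · constructor
    intro c1 c2
    induction c1 using SimpleGraph.ConnectedComponent.ind with | _ a =>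
    induction c2 using SimpleGraph.ConnectedComponent.ind with | _ b =>
    exact SimpleGraph.ConnectedComponent.sound (h.preconnected a b)
  · have : Nonempty G.V := h.nonempty
    exact ⟨SimpleGraph.connectedComponentMk _ (Classical.arbitrary _)⟩

lemma rk_congr {G : Multigraph} {A B : Finset G.E}
    (h : G.spanning A = G.spanning B) : G.rk A = G.rk B := by
  unfold Multigraph.rk Multigraph.comps
  rw [h]

lemma spanning_deleteSet (G : Multigraph) (F : Finset G.E)
    (A : Finset (G.deleteSet F).E) :
    (G.deleteSet F).spanning A =
      G.spanning (A.map (Function.Embedding.subtype fun e => e ∉ F)) := by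
  ext a b
  simp only [Multigraph.spanning, SimpleGraph.fromRel_adj]
  constructor
  · rintro ⟨hne, h | h⟩ <;> obtain ⟨e, he, hee⟩ := h
    · exact ⟨hne, Or.inl ⟨e.1, Finset.mem_map_of_mem _ he, hee⟩⟩
    · exact ⟨hne, Or.inr ⟨e.1, Finset.mem_map_of_mem _ he, hee⟩⟩
  · rintro ⟨hne, h | h⟩ <;> obtain ⟨e, he, hee⟩ := h <;>
      obtain ⟨d, hd, rfl⟩ := Finset.mem_map.mp he
    · exact ⟨hne, Or.inl ⟨d, hd, hee⟩⟩
    · exact ⟨hne, Or.inr ⟨d, hd, hee⟩⟩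

lemma rk_deleteSet (G : Multigraph) (F : Finset G.E)
    (A : Finset (G.deleteSet F).E) :
    (G.deleteSet F).rk A =
      G.rk (A.map (Function.Embedding.subtype fun e => e ∉ F)) := by
  unfold Multigraph.rk Multigraph.comps
  have h := spanning_deleteSet G F A
  have h2 : Fintype.card (G.deleteSet F).V = Fintype.card G.V := rfl
  rw [h2]
  congr 1
  exact congrArg (fun H => Nat.card H.ConnectedComponent) h

end GraphLemmas

end MultigraphAux

end AuxTutte

section KeyRel

namespace MultigraphAux

open MvPolynomial

lemma tutte_rel (G : Multigraph) (e1 e2 : G.E) (hne : e1 ≠ e2)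
    (hpe : G.ends e1 = G.ends e2)
    (hcG : (G.deleteSet {e1, e2}).Connected) :
    G.tutte + X 1 * (G.deleteSet {e1, e2}).tutte
      = (X 1 + 1) * (G.delete e1).tutte := by
  classical
  set D := G.deleteSet {e1, e2} with hD
  set G1 := G.delete e1 with hG1
  -- embeddings
  set emb : D.E ↪ G.E := Function.Embedding.subtype fun e => e ∉ ({e1, e2} : Finset G.E)
    with hembdef
  set emb0 : G1.E ↪ G.E := Function.Embedding.subtype fun e => e ∉ ({e1} : Finset G.E)
    with hemb0def
  have he2mem : e2 ∉ ({e1} : Finset G.E) := by simp [Ne.symm hne]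
  set e2' : G1.E := ⟨e2, he2mem⟩ with he2'
  set emb1 : D.E ↪ G1.E :=
    (Function.Embedding.codRestrict {e : G.E | e ∉ ({e1} : Finset G.E)}
      (Function.Embedding.subtype fun e => e ∉ ({e1, e2} : Finset G.E))
      (fun d => by
        intro h
        have h' : d.1 = e1 := Finset.mem_singleton.mp h
        exact d.2 (by simp [h'])) : D.E ↪ G1.E) with hemb1def
  have hembcomp : emb1.trans emb0 = emb := by
    ext d; rfl
  set n := Fintype.card G.V with hn
  -- connectivity facts
  have hspD : D.spanning Finset.univ =
      G.spanning ((Finset.univ : Finset D.E).map emb) := spanning_deleteSet G _ _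
  have hconnD : (G.spanning ((Finset.univ : Finset D.E).map emb)).Connected := by
    rw [← hspD]; exact hcG
  have hconnG : (G.spanning Finset.univ).Connected :=
    SimpleGraph.Connected.mono (spanning_mono (Finset.subset_univ _)) hconnD
  have hspG1 : G1.spanning ((Finset.univ : Finset D.E).map emb1) =
      G.spanning ((Finset.univ : Finset D.E).map emb) := by
    have h : G1.spanning ((Finset.univ : Finset D.E).map emb1) =
        G.spanning ((((Finset.univ : Finset D.E).map emb1)).map emb0) :=
      spanning_deleteSet G {e1} _
    rw [h, Finset.map_map, hembcomp]
  have hconnG1 : (G1.spanning Finset.univ).Connected := by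
    apply SimpleGraph.Connected.mono (spanning_mono (Finset.subset_univ _))
    rw [hspG1]; exact hconnD
  -- universal ranks
  have hcompG : G.comps Finset.univ = 1 := comps_eq_one hconnG
  have hcompG1 : G1.comps Finset.univ = 1 := comps_eq_one hconnG1
  have hcompD : D.comps Finset.univ = 1 := comps_eq_one hcG
  have hrkG : G.rk Finset.univ = n - 1 := by unfold Multigraph.rk; rw [hcompG]
  have hrkG1 : G1.rk Finset.univ = n - 1 := by
    unfold Multigraph.rk; rw [hcompG1]
    have : Fintype.card G1.V = n := rfl
    rw [this]
  have hrkD : D.rk Finset.univ = n - 1 := by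
    unfold Multigraph.rk; rw [hcompD]
    have : Fintype.card D.V = n := rfl
    rw [this]
  -- range conditions for expansions
  have hrange : ∀ x : G.E, x ∈ Finset.univ \ ({e1, e2} : Finset G.E) ↔
      ∃ d : D.E, emb d = x := by
    intro x
    simp only [Finset.mem_sdiff, Finset.mem_univ, true_and, hembdef,
      Function.Embedding.coe_subtype]
    constructor
    · intro hx; exact ⟨⟨x, hx⟩, rfl⟩
    · rintro ⟨d, rfl⟩; exact d.2
  have hrange1 : ∀ x : G1.E, x ∈ Finset.univ \ ({e2'} : Finset G1.E) ↔
      ∃ d : D.E, emb1 d = x := by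
    intro x
    simp only [Finset.mem_sdiff, Finset.mem_univ, true_and, Finset.mem_singleton]
    constructor
    · intro hx
      have hx1 : x.1 ∉ ({e1, e2} : Finset G.E) := by
        intro hmem
        rcases Finset.mem_insert.mp hmem with h | h
        · exact x.2 (by simp [h])
        · rw [Finset.mem_singleton] at h
          exact hx (Subtype.ext h)
      exact ⟨⟨x.1, hx1⟩, Subtype.ext rfl⟩
    · rintro ⟨d, rfl⟩
      intro hd
      have : d.1 = e2 := congrArg Subtype.val hd
      exact d.2 (by simp [this])
  -- expansions
  have hGexp := expand_two e1 e2 hne emb hrange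
    (fun A : Finset G.E =>
      (X 0 - 1 : MvPolynomial (Fin 2) ℤ) ^ (G.rk Finset.univ - G.rk A) *
        (X 1 - 1) ^ (A.card - G.rk A))
  have hG1exp := expand_one e2' emb1 hrange1
    (fun A : Finset G1.E =>
      (X 0 - 1 : MvPolynomial (Fin 2) ℤ) ^ (G1.rk Finset.univ - G1.rk A) *
        (X 1 - 1) ^ (A.card - G1.rk A))
  show (∑ A : Finset G.E, _) + X 1 * (∑ B : Finset D.E, _)
      = (X 1 + 1) * ∑ A : Finset G1.E, _
  rw [hGexp, hG1exp, Finset.mul_sum, Finset.mul_sum, ← Finset.sum_add_distrib]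
  apply Finset.sum_congr rfl
  intro B _
  -- notation
  set mB := B.map emb with hmB
  set mB1 := B.map emb1 with hmB1
  -- membership facts
  have he1B : e1 ∉ mB := by
    intro h
    obtain ⟨d, _, hd⟩ := Finset.mem_map.mp h
    have hd' : d.1 = e1 := hd
    exact d.2 (by simp [hd'])
  have he2B : e2 ∉ mB := by
    intro h
    obtain ⟨d, _, hd⟩ := Finset.mem_map.mp h
    have hd' : d.1 = e2 := hd
    exact d.2 (by simp [hd'])
  have he2'B : e2' ∉ mB1 := by
    intro h
    obtain ⟨d, _, hd⟩ := Finset.mem_map.mp h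
    have : d.1 = e2 := congrArg Subtype.val hd
    exact d.2 (by simp [this])
  have he1B' : e1 ∉ insert e2 mB := by
    simp [Finset.mem_insert, hne, he1B]
  -- rank abbreviations and facts
  set r0 := G.rk mB with hr0
  set r1 := G.rk (insert e1 mB) with hr1
  have hrk2 : G.rk (insert e2 mB) = r1 := by
    apply rk_congr
    apply spanning_congr
    intro p
    constructor
    · rintro ⟨f, hf, hff⟩
      rcases Finset.mem_insert.mp hf with heq | hfB
      · exact ⟨e1, Finset.mem_insert_self _ _, by rw [hpe, ← heq]; exact hff⟩
      · exact ⟨f, Finset.mem_insert_of_mem hfB, hff⟩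
    · rintro ⟨f, hf, hff⟩
      rcases Finset.mem_insert.mp hf with heq | hfB
      · exact ⟨e2, Finset.mem_insert_self _ _, by rw [← hpe, ← heq]; exact hff⟩
      · exact ⟨f, Finset.mem_insert_of_mem hfB, hff⟩
  have hrk12 : G.rk (insert e1 (insert e2 mB)) = r1 := by
    apply rk_congr
    apply spanning_congr
    intro p
    constructor
    · rintro ⟨f, hf, hff⟩
      rcases Finset.mem_insert.mp hf with heq | hf2
      · exact ⟨e1, Finset.mem_insert_self _ _, by rw [← heq]; exact hff⟩
      rcases Finset.mem_insert.mp hf2 with heq | hfB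
      · exact ⟨e1, Finset.mem_insert_self _ _, by rw [hpe, ← heq]; exact hff⟩
      · exact ⟨f, Finset.mem_insert_of_mem hfB, hff⟩
    · rintro ⟨f, hf, hff⟩
      rcases Finset.mem_insert.mp hf with heq | hfB
      · exact ⟨e1, Finset.mem_insert_self _ _, by rw [← heq]; exact hff⟩
      · exact ⟨f, Finset.mem_insert_of_mem (Finset.mem_insert_of_mem hfB), hff⟩
  have hrkDB : D.rk B = r0 := rk_deleteSet G _ B
  have hrkG1a : G1.rk mB1 = r0 := by
    have h : G1.rk mB1 = G.rk ((B.map emb1).map emb0) := rk_deleteSet G {e1} mB1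
    rw [h, Finset.map_map, hembcomp]
  have hrkG1b : G1.rk (insert e2' mB1) = r1 := by
    have h : G1.rk (insert e2' mB1) = G.rk ((insert e2' (B.map emb1)).map emb0) :=
      rk_deleteSet G {e1} _
    rw [h, Finset.map_insert, Finset.map_map, hembcomp]
    exact hrk2
  -- cards
  have hcmB : mB.card = B.card := Finset.card_map _
  have hcmB1 : mB1.card = B.card := Finset.card_map _
  have hc2 : (insert e2 mB).card = B.card + 1 := by
    rw [Finset.card_insert_of_notMem he2B, hcmB]
  have hc1 : (insert e1 mB).card = B.card + 1 := by
    rw [Finset.card_insert_of_notMem he1B, hcmB]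
  have hc12 : (insert e1 (insert e2 mB)).card = B.card + 2 := by
    rw [Finset.card_insert_of_notMem he1B', hc2]
  have hc2' : (insert e2' mB1).card = B.card + 1 := by
    rw [Finset.card_insert_of_notMem he2'B, hcmB1]
  -- rank bound
  have hr1le : r1 ≤ B.card + 1 := by
    have h := card_V_le G (insert e1 mB)
    rw [hc1] at h
    rw [hr1]
    unfold Multigraph.rk
    omega
  have hsplit : B.card + 2 - r1 = (B.card + 1 - r1) + 1 := by omega
  -- final algebra
  simp only [hrkG, hrkG1, hrkD, hrk2, hrk12, hrkDB, hrkG1a, hrkG1b,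
    hcmB, hcmB1, hc2, hc1, hc12, hc2', hsplit, pow_succ]
  ring

end MultigraphAux

end KeyRel

/-- any two of the three Tutte-polynomial equalities imply the third. -/
theorem stmt_1 (G H : Multigraph) (e1 e2 : G.E) (f1 f2 : H.E)
    (hne : e1 ≠ e2) (hnf : f1 ≠ f2)
    (hpe : G.ends e1 = G.ends e2) (hpf : H.ends f1 = H.ends f2)
    (hle : ¬ (G.ends e1).IsDiag) (hlf : ¬ (H.ends f1).IsDiag)
    (hcG : (G.deleteSet {e1, e2}).Connected) (hcH : (H.deleteSet {f1, f2}).Connected) :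
    (((G.deleteSet {e1, e2}).tutte = (H.deleteSet {f1, f2}).tutte →
        (G.delete e1).tutte = (H.delete f1).tutte → G.tutte = H.tutte) ∧
      ((G.deleteSet {e1, e2}).tutte = (H.deleteSet {f1, f2}).tutte →
        G.tutte = H.tutte → (G.delete e1).tutte = (H.delete f1).tutte) ∧
      ((G.delete e1).tutte = (H.delete f1).tutte → G.tutte = H.tutte →
        (G.deleteSet {e1, e2}).tutte = (H.deleteSet {f1, f2}).tutte)) := by
  have kG := MultigraphAux.tutte_rel G e1 e2 hne hpe hcG
  have kH := MultigraphAux.tutte_rel H f1 f2 hnf hpf hcH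
  have hy : (X 1 : MvPolynomial (Fin 2) ℤ) ≠ 0 := MvPolynomial.X_ne_zero 1
  have hy1 : (X 1 + 1 : MvPolynomial (Fin 2) ℤ) ≠ 0 := by
    intro h
    have h2 := congrArg (MvPolynomial.eval (fun _ : Fin 2 => (0 : ℤ))) h
    simp at h2
  refine ⟨?_, ?_, ?_⟩
  · intro h0 h1
    linear_combination kG - kH + (X 1 + 1 : MvPolynomial (Fin 2) ℤ) * h1 -
      (X 1 : MvPolynomial (Fin 2) ℤ) * h0
  · intro h0 h2
    have h3 : (X 1 + 1 : MvPolynomial (Fin 2) ℤ) * (G.delete e1).tutte =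
        (X 1 + 1) * (H.delete f1).tutte := by
      linear_combination -kG + kH + h2 + (X 1 : MvPolynomial (Fin 2) ℤ) * h0
    exact mul_left_cancel₀ hy1 h3
  · intro h1 h2
    have h3 : (X 1 : MvPolynomial (Fin 2) ℤ) * (G.deleteSet {e1, e2}).tutte =
        X 1 * (H.deleteSet {f1, f2}).tutte := by
      linear_combination kG - kH - h2 + (X 1 + 1 : MvPolynomial (Fin 2) ℤ) * h1
    exact mul_left_cancel₀ hy h3
end

section
/- Let G and H be vertex-disjoint connected multigraphs with distinguished distinct vertices u_1,…,u_k in G and v_1,…,v_k in H. For S ⊆ {{i,j} : 1 ≤ i < j ≤ k}, let G_S (resp. H_S) be G (resp. H) with a new edge joining u_i and u_j (resp. v_i and v_j) added for each {i,j} ∈ S. If T_{G_S} = T_{H_S} for every such subset S, then for every multigraph W with distinct vertices w_1,…,w_k, the graph obtained by gluing G to W by identifying u_i with w_i for each i has the same Tutte polynomial as the graph obtained by gluing H to W by identifying v_i with w_i for each i. -/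
open scoped BigOperators
open MvPolynomial

attribute [local instance] Classical.propDecidable

open Relation

namespace TutteAux


variable {α β ι : Type}

instance quotFinite [Finite α] (r : α → α → Prop) : Finite (Quot r) :=
  Finite.of_surjective (Quot.mk r) (Quot.mk_surjective)

/-- number of classes of the equivalence closure -/
noncomputable def nc (r : α → α → Prop) : ℕ := Nat.card (Quot r)

theorem eqvGen_idem {r : α → α → Prop} {a b : α} (h : EqvGen (EqvGen r) a b) :
    EqvGen r a b := by
  induction h with
  | rel _ _ h => exact h
  | refl => exact EqvGen.refl _
  | symm _ _ _ ih => exact ih.symm _ _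
  | trans _ _ _ _ _ ih1 ih2 => exact ih1.trans _ _ _ ih2

theorem eqvGen_of_gen {r s : α → α → Prop} (h : ∀ a b, r a b → EqvGen s a b)
    {a b : α} (hab : EqvGen r a b) : EqvGen s a b :=
  eqvGen_idem (hab.mono h)

/-- classes of `Quot r` are classes of `EqvGen r` -/
def quotCongr {r s : α → α → Prop} (h : ∀ a b, EqvGen r a b ↔ EqvGen s a b) :
    Quot r ≃ Quot s where
  toFun := Quot.lift (Quot.mk s) (fun a b hab => Quot.eqvGen_sound ((h a b).1 (EqvGen.rel _ _ hab)))
  invFun := Quot.lift (Quot.mk r) (fun a b hab => Quot.eqvGen_sound ((h a b).2 (EqvGen.rel _ _ hab)))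
  left_inv := by intro q; induction q using Quot.ind; rfl
  right_inv := by intro q; induction q using Quot.ind; rfl

theorem nc_congr_eqvGen {r s : α → α → Prop} (h : ∀ a b, EqvGen r a b ↔ EqvGen s a b) :
    nc r = nc s := Nat.card_congr (quotCongr h)

theorem nc_congr {r s : α → α → Prop} (h : ∀ a b, r a b ↔ s a b) : nc r = nc s := by
  have : r = s := funext fun a => funext fun b => propext (h a b)
  rw [nc, this]; rfl

/-- transport along an equivalence of the underlying type -/
theorem nc_equiv (e : α ≃ β) (r : β → β → Prop) :
    nc (fun a a' => r (e a) (e a')) = nc r := by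
  refine Nat.card_congr ⟨Quot.lift (fun a => Quot.mk r (e a)) (fun a b hab => Quot.sound hab),
    Quot.lift (fun b => Quot.mk _ (e.symm b)) (fun a b hab => Quot.sound ?_), ?_, ?_⟩
  · show r (e (e.symm a)) (e (e.symm b)); simpa using hab
  · intro q; induction q using Quot.ind with
    | _ a => simp
  · intro q; induction q using Quot.ind with
    | _ a => simp

theorem nc_le_card [Finite α] (r : α → α → Prop) : nc r ≤ Nat.card α :=
  Nat.card_le_card_of_surjective (Quot.mk r) Quot.mk_surjective

theorem nc_pos [Finite α] [Nonempty α] (r : α → α → Prop) : 0 < nc r := by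
  have : Nonempty (Quot r) := ⟨Quot.mk r (Classical.arbitrary α)⟩
  exact Nat.card_pos

theorem nc_mono [Finite α] {r s : α → α → Prop} (h : ∀ a b, r a b → s a b) :
    nc s ≤ nc r :=
  Nat.card_le_card_of_surjective
    (Quot.lift (Quot.mk s) (fun a b hab => Quot.sound (h a b hab)))
    (by intro q; induction q using Quot.ind with
        | _ a => exact ⟨Quot.mk r a, rfl⟩)

theorem nc_eq_card [Finite α] {r : α → α → Prop} (h : ∀ a b, ¬ r a b) :
    nc r = Nat.card α :=
  Nat.card_congr ⟨Quot.lift id (fun a b hab => absurd hab (h a b)), Quot.mk r,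
    by intro q; induction q using Quot.ind with | _ a => rfl, fun _ => rfl⟩




theorem eqvGen_pair_cases {r s : α → α → Prop} {a b : α}
    (h2 : ∀ x y, s x y → r x y ∨ ((x = a ∧ y = b) ∨ (x = b ∧ y = a)))
    {c d : α} (h : EqvGen s c d) :
    EqvGen r c d ∨ ((EqvGen r c a ∨ EqvGen r c b) ∧ (EqvGen r d a ∨ EqvGen r d b)) := by
  induction h with
  | rel x y hxy =>
    rcases h2 x y hxy with h | ⟨hx, hy⟩ | ⟨hx, hy⟩
    · exact Or.inl (EqvGen.rel _ _ h)
    · subst hx; subst hy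
      exact Or.inr ⟨Or.inl (EqvGen.refl _), Or.inr (EqvGen.refl _)⟩
    · subst hx; subst hy
      exact Or.inr ⟨Or.inr (EqvGen.refl _), Or.inl (EqvGen.refl _)⟩
  | refl x => exact Or.inl (EqvGen.refl _)
  | symm x y _ ih =>
    rcases ih with h | ⟨u1, u2⟩
    · exact Or.inl (h.symm _ _)
    · exact Or.inr ⟨u2, u1⟩
  | trans x y z _ _ ih1 ih2 =>
    rcases ih1 with h1 | ⟨hx, hy⟩
    · rcases ih2 with h2 | ⟨hy', hz⟩
      · exact Or.inl (h1.trans _ _ _ h2)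
      · refine Or.inr ⟨?_, hz⟩
        rcases hy' with h | h
        · exact Or.inl (h1.trans _ _ _ h)
        · exact Or.inr (h1.trans _ _ _ h)
    · rcases ih2 with h2 | ⟨hy', hz⟩
      · refine Or.inr ⟨hx, ?_⟩
        rcases hy with h | h
        · exact Or.inl ((h2.symm _ _).trans _ _ _ h)
        · exact Or.inr ((h2.symm _ _).trans _ _ _ h)
      · exact Or.inr ⟨hx, hz⟩

theorem nc_le_pair [Finite α] {r s : α → α → Prop} {a b : α}
    (h1 : ∀ x y, r x y → s x y)
    (h2 : ∀ x y, s x y → r x y ∨ ((x = a ∧ y = b) ∨ (x = b ∧ y = a))) :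
    nc r ≤ nc s + 1 := by
  classical
  have : Finite (Quot r) := Finite.of_surjective (Quot.mk r) Quot.mk_surjective
  have : Finite (Quot s) := Finite.of_surjective (Quot.mk s) Quot.mk_surjective
  set f : Quot r → Quot s := Quot.lift (Quot.mk s) (fun x y hxy => Quot.sound (h1 x y hxy)) with hf
  have key : ∀ x y : Quot r, f x = f y → x ≠ Quot.mk r b → y ≠ Quot.mk r b → x = y := by
    intro x y hxy hx hy
    induction x using Quot.ind with | _ c =>
    induction y using Quot.ind with | _ d =>
    have : EqvGen s c d := Quot.eqvGen_exact hxy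
    rcases eqvGen_pair_cases h2 this with h | ⟨hc, hd⟩
    · exact Quot.eqvGen_sound h
    · rcases hc with h | h
      · rcases hd with h' | h'
        · exact (Quot.eqvGen_sound h).trans (Quot.eqvGen_sound h').symm
        · exact absurd (Quot.eqvGen_sound h') hy
      · exact absurd (Quot.eqvGen_sound h) hx
  have hcard : Nat.card (Quot r) ≤ Nat.card {q : Quot r // q ≠ Quot.mk r b} + 1 := by
    have hs := Nat.card_sum (α := {q : Quot r // q = Quot.mk r b}) (β := {q : Quot r // q ≠ Quot.mk r b})
    have he : Nat.card (Quot r) =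
        Nat.card {q : Quot r // q = Quot.mk r b} + Nat.card {q : Quot r // q ≠ Quot.mk r b} := by
      rw [← hs]; exact (Nat.card_congr (Equiv.sumCompl _)).symm
    have h1' : Nat.card {q : Quot r // q = Quot.mk r b} ≤ 1 := by
      have : Subsingleton {q : Quot r // q = Quot.mk r b} :=
        ⟨fun q q' => Subtype.ext (q.2.trans q'.2.symm)⟩
      rcases isEmpty_or_nonempty {q : Quot r // q = Quot.mk r b} with h | h
      · simp [Nat.card_eq_zero.mpr (Or.inl h)]
      · exact le_of_eq (Nat.card_of_subsingleton (Classical.arbitrary _))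
    omega
  refine hcard.trans (Nat.add_le_add_right ?_ 1)
  exact Nat.card_le_card_of_injective (fun q => f q.1)
    (fun q q' h => Subtype.ext (key _ _ h q.2 q'.2))




/-- combined relation on a sum type, with links `u i ~ w i` -/
def sumRel (r : α → α → Prop) (s : β → β → Prop) (u : ι → α) (w : ι → β) :
    α ⊕ β → α ⊕ β → Prop
  | Sum.inl a, Sum.inl a' => r a a'
  | Sum.inr b, Sum.inr b' => s b b'
  | Sum.inl a, Sum.inr b => ∃ i, a = u i ∧ b = w i
  | Sum.inr _, Sum.inl _ => False

theorem eqvGen_inl {r : α → α → Prop} {s : β → β → Prop} {u : ι → α} {w : ι → β}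
    {a a' : α} (h : EqvGen r a a') :
    Quot.mk (sumRel r s u w) (Sum.inl a) = Quot.mk (sumRel r s u w) (Sum.inl a') := by
  induction h with
  | rel x y hxy => exact Quot.sound hxy
  | refl x => rfl
  | symm x y _ ih => exact ih.symm
  | trans x y z _ _ ih1 ih2 => exact ih1.trans ih2

theorem glCount [Finite α] [Finite β] (r : α → α → Prop) (s : β → β → Prop)
    (u : ι → α) (w : ι → β) :
    nc (sumRel r s u w) + nc (fun i j : ι => EqvGen r (u i) (u j))
      = nc r + nc (fun b b' : β =>
          s b b' ∨ ∃ i j, EqvGen r (u i) (u j) ∧ b = w i ∧ b' = w j) := by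
  classical
  set ρ : ι → ι → Prop := fun i j => EqvGen r (u i) (u j) with hρ
  set s' : β → β → Prop := fun b b' =>
    s b b' ∨ ∃ i j, EqvGen r (u i) (u j) ∧ b = w i ∧ b' = w j with hs'
  set T : Quot r → Prop := fun c => ∃ i, c = Quot.mk r (u i) with hT
  -- e2 : classes of ρ ≃ touched classes
  have e2 : Quot ρ ≃ {c : Quot r // T c} := by
    refine ⟨Quot.lift (fun i => ⟨Quot.mk r (u i), ⟨i, rfl⟩⟩)
      (fun i j hij => Subtype.ext (Quot.eqvGen_sound hij)),
      fun c => Quot.mk ρ c.2.choose, ?_, ?_⟩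
    · intro q
      induction q using Quot.ind with | _ i =>
      apply Quot.sound
      show EqvGen r (u _) (u i)
      exact Quot.eqvGen_exact ((⟨i, rfl⟩ : ∃ j, Quot.mk r (u i) = Quot.mk r (u j)).choose_spec).symm
    · rintro ⟨c, hc⟩
      exact Subtype.ext hc.choose_spec.symm
  -- the forward map on representatives
  set F : α ⊕ β → ({c : Quot r // ¬ T c} ⊕ Quot s') := fun x =>
    match x with
    | Sum.inl a =>
        if h : ∃ i, EqvGen r a (u i) then Sum.inr (Quot.mk s' (w h.choose))
        else Sum.inl ⟨Quot.mk r a, fun ⟨i, hi⟩ => h ⟨i, Quot.eqvGen_exact hi⟩⟩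
    | Sum.inr b => Sum.inr (Quot.mk s' b) with hF
  have hresp : ∀ x y, sumRel r s u w x y → F x = F y := by
    rintro (a | b) (a' | b') hxy
    · -- inl inl
      have hr : r a a' := hxy
      by_cases h : ∃ i, EqvGen r a (u i)
      · have h' : ∃ i, EqvGen r a' (u i) :=
          ⟨h.choose, ((EqvGen.rel _ _ hr).symm _ _).trans _ _ _ h.choose_spec⟩
        simp only [hF, dif_pos h, dif_pos h']
        have : EqvGen r (u h.choose) (u h'.choose) :=
          ((h.choose_spec.symm _ _).trans _ _ _ (EqvGen.rel _ _ hr)).trans _ _ _ h'.choose_spec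
        exact congrArg Sum.inr (Quot.sound (Or.inr ⟨_, _, this, rfl, rfl⟩))
      · have h' : ¬ ∃ i, EqvGen r a' (u i) := by
          rintro ⟨i, hi⟩
          exact h ⟨i, (EqvGen.rel _ _ hr).trans _ _ _ hi⟩
        simp only [hF, dif_neg h, dif_neg h']
        exact congrArg Sum.inl (Subtype.ext (Quot.sound hr))
    · -- inl inr : link
      obtain ⟨i, ha, hb⟩ := hxy
      subst ha; subst hb
      have h : ∃ j, EqvGen r (u i) (u j) := ⟨i, EqvGen.refl _⟩
      simp only [hF, dif_pos h]
      exact congrArg Sum.inr (Quot.sound (Or.inr ⟨_, _, h.choose_spec.symm _ _, rfl, rfl⟩))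
    · exact absurd hxy (by simp [sumRel])
    · exact congrArg Sum.inr (Quot.sound (Or.inl hxy))
  set Fwd : Quot (sumRel r s u w) → ({c : Quot r // ¬ T c} ⊕ Quot s') :=
    Quot.lift F hresp with hFwd
  set Bneg : {c : Quot r // ¬ T c} → Quot (sumRel r s u w) := fun c =>
    Quot.lift (fun a => Quot.mk (sumRel r s u w) (Sum.inl a))
      (fun a a' h => Quot.sound (show sumRel r s u w (Sum.inl a) (Sum.inl a') from h)) c.1
    with hBneg
  set Bs : Quot s' → Quot (sumRel r s u w) :=
    Quot.lift (fun b => Quot.mk (sumRel r s u w) (Sum.inr b)) (by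
      rintro b b' (hbb | ⟨i, j, hij, hb, hb'⟩)
      · exact Quot.sound (show sumRel r s u w (Sum.inr b) (Sum.inr b') from hbb)
      · subst hb; subst hb'
        have l1 : Quot.mk (sumRel r s u w) (Sum.inl (u i)) = Quot.mk _ (Sum.inr (w i)) :=
          Quot.sound ⟨i, rfl, rfl⟩
        have l2 : Quot.mk (sumRel r s u w) (Sum.inl (u j)) = Quot.mk _ (Sum.inr (w j)) :=
          Quot.sound ⟨j, rfl, rfl⟩
        exact l1.symm.trans ((eqvGen_inl hij).trans l2)) with hBs
  set Bwd : ({c : Quot r // ¬ T c} ⊕ Quot s') → Quot (sumRel r s u w) :=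
    Sum.elim Bneg Bs with hBwd
  have e1 : Quot (sumRel r s u w) ≃ ({c : Quot r // ¬ T c} ⊕ Quot s') := by
    refine ⟨Fwd, Bwd, ?_, ?_⟩
    · intro q
      induction q using Quot.ind with | _ x =>
      rcases x with a | b
      · by_cases h : ∃ i, EqvGen r a (u i)
        · have : Fwd (Quot.mk _ (Sum.inl a)) = Sum.inr (Quot.mk s' (w h.choose)) := by
            simp only [hFwd, hF]; exact dif_pos h
          rw [this]
          show Quot.mk _ (Sum.inr (w h.choose)) = Quot.mk _ (Sum.inl a)
          have l1 : Quot.mk (sumRel r s u w) (Sum.inl (u h.choose)) =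
              Quot.mk _ (Sum.inr (w h.choose)) := Quot.sound ⟨_, rfl, rfl⟩
          exact l1.symm.trans (eqvGen_inl h.choose_spec).symm
        · have : Fwd (Quot.mk _ (Sum.inl a)) =
              Sum.inl ⟨Quot.mk r a, fun ⟨i, hi⟩ => h ⟨i, Quot.eqvGen_exact hi⟩⟩ := by
            simp only [hFwd, hF]; exact dif_neg h
          rw [this]
          simp only [hBwd, hBneg, Sum.elim_inl]
      · simp only [hFwd, hBwd, hBs, hF, Sum.elim_inr]
    · rintro (⟨c, hc⟩ | q)
      · obtain ⟨a, rfl⟩ := Quot.exists_rep c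
        show Fwd (Quot.mk _ (Sum.inl a)) = _
        have h : ¬ ∃ i, EqvGen r a (u i) := fun ⟨i, hi⟩ => hc ⟨i, Quot.eqvGen_sound hi⟩
        have : Fwd (Quot.mk _ (Sum.inl a)) =
            Sum.inl ⟨Quot.mk r a, fun ⟨i, hi⟩ => h ⟨i, Quot.eqvGen_exact hi⟩⟩ := by
          simp only [hFwd, hF]; exact dif_neg h
        rw [this]
      · induction q using Quot.ind with | _ b =>
        simp only [hBwd, hFwd, hBs, hF, Sum.elim_inr]
  -- counting
  have f1 : Finite (Quot r) := Finite.of_surjective (Quot.mk r) Quot.mk_surjective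
  have f2 : Finite (Quot s') := Finite.of_surjective (Quot.mk s') Quot.mk_surjective
  have hsum : Nat.card (Quot r) =
      Nat.card {c : Quot r // T c} + Nat.card {c : Quot r // ¬ T c} := by
    rw [← Nat.card_sum]
    exact (Nat.card_congr (Equiv.sumCompl _)).symm
  have h1 : nc (sumRel r s u w) =
      Nat.card {c : Quot r // ¬ T c} + Nat.card (Quot s') := by
    rw [nc, Nat.card_congr e1, Nat.card_sum]
  have h2 : nc ρ = Nat.card {c : Quot r // T c} := Nat.card_congr e2
  show nc (sumRel r s u w) + nc ρ = nc r + nc s'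
  rw [h1, h2, nc, nc, hsum]
  omega



end TutteAux
namespace TutteAux
open Relation

variable {α β ι : Type}

/-- the edge relation of an edge subset -/
def eRel (G : Multigraph) (A : Finset G.E) : G.V → G.V → Prop :=
  fun a b => ∃ e ∈ A, G.ends e = s(a, b)

theorem eRel_symm {G : Multigraph} {A : Finset G.E} {a b : G.V} (h : eRel G A a b) :
    eRel G A b a := by
  obtain ⟨e, he, h⟩ := h
  exact ⟨e, he, by rwa [Sym2.eq_swap]⟩

theorem exists_pair_eq (G : Multigraph) (e : G.E) : ∃ a b, G.ends e = s(a, b) :=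
  @Sym2.ind G.V (fun p => ∃ a b, p = s(a, b)) (fun x y => ⟨x, y, rfl⟩) (G.ends e)

theorem reachable_iff_eqvGen {V : Type} (Gr : SimpleGraph V) (a b : V) :
    Gr.Reachable a b ↔ EqvGen Gr.Adj a b := by
  constructor
  · intro h
    rw [SimpleGraph.reachable_iff_reflTransGen] at h
    induction h with
    | refl => exact EqvGen.refl _
    | tail _ hadj ih => exact ih.trans _ _ _ (EqvGen.rel _ _ hadj)
  · intro h
    induction h with
    | rel x y hxy => exact hxy.reachable
    | refl x => exact SimpleGraph.Reachable.refl x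
    | symm x y _ ih => exact ih.symm
    | trans x y z _ _ ih1 ih2 => exact ih1.trans ih2

theorem comps_eq_nc (G : Multigraph) (A : Finset G.E) : G.comps A = nc (eRel G A) := by
  show Nat.card (Quot (G.spanning A).Reachable) = _
  apply nc_congr_eqvGen
  intro a b
  constructor
  · intro h
    refine eqvGen_of_gen (fun x y hxy => ?_) h
    rw [reachable_iff_eqvGen] at hxy
    refine eqvGen_of_gen (fun x' y' hxy' => ?_) hxy
    simp only [Multigraph.spanning, SimpleGraph.fromRel_adj] at hxy'
    rcases hxy'.2 with h' | h'
    · exact EqvGen.rel _ _ h'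
    · exact (EqvGen.rel _ _ h').symm _ _
  · intro h
    refine eqvGen_of_gen (fun x y hxy => ?_) h
    refine EqvGen.rel _ _ ?_
    by_cases hxy' : x = y
    · subst hxy'; exact SimpleGraph.Reachable.refl x
    · exact SimpleGraph.Adj.reachable (by simp only [Multigraph.spanning, SimpleGraph.fromRel_adj]; exact ⟨hxy', Or.inl hxy⟩)

theorem comps_le_card (G : Multigraph) (A : Finset G.E) :
    G.comps A ≤ Fintype.card G.V := by
  rw [comps_eq_nc, ← Nat.card_eq_fintype_card]
  exact nc_le_card _

theorem comps_mono (G : Multigraph) {A B : Finset G.E} (h : A ⊆ B) :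
    G.comps B ≤ G.comps A := by
  rw [comps_eq_nc, comps_eq_nc]
  exact nc_mono (fun a b ⟨e, he, hab⟩ => ⟨e, h he, hab⟩)

theorem comps_empty (G : Multigraph) : G.comps (∅ : Finset G.E) = Fintype.card G.V := by
  rw [comps_eq_nc, ← Nat.card_eq_fintype_card]
  exact nc_eq_card (by rintro a b ⟨e, he, _⟩; exact absurd he (Finset.notMem_empty e))

theorem comps_pos (G : Multigraph) [Nonempty G.V] (A : Finset G.E) : 0 < G.comps A := by
  rw [comps_eq_nc]; exact nc_pos _

theorem card_le_comps_add (G : Multigraph) (A : Finset G.E) :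
    Fintype.card G.V ≤ A.card + G.comps A := by
  classical
  induction A using Finset.induction_on with
  | empty => simp [comps_empty]
  | @insert e A he ih =>
    have step : G.comps A ≤ G.comps (insert e A) + 1 := by
      obtain ⟨a, b, hab⟩ := exists_pair_eq G e
      rw [comps_eq_nc, comps_eq_nc]
      refine nc_le_pair (a := a) (b := b)
        (fun x y ⟨e', he', h⟩ => ⟨e', Finset.mem_insert_of_mem he', h⟩) ?_
      rintro x y ⟨e', he', h⟩
      rcases Finset.mem_insert.1 he' with rfl | he'
      · right
        rw [hab] at h
        rcases Sym2.eq_iff.1 h with ⟨h1, h2⟩ | ⟨h1, h2⟩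
        · exact Or.inl ⟨h1.symm, h2.symm⟩
        · exact Or.inr ⟨h2.symm, h1.symm⟩
      · exact Or.inl ⟨e', he', h⟩
    rw [Finset.card_insert_of_notMem he]
    omega

end TutteAux
namespace TutteAux
open Relation

variable {α β ι : Type}

theorem sym2_map_eq {f : α → β} {p : Sym2 α} {x y : β} (h : Sym2.map f p = s(x, y)) :
    ∃ a b, p = s(a, b) ∧ f a = x ∧ f b = y := by
  induction p using Sym2.ind with | _ a b =>
  rw [Sym2.map_pair_eq] at h
  rcases Sym2.eq_iff.1 h with ⟨h1, h2⟩ | ⟨h1, h2⟩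
  · exact ⟨a, b, rfl, h1, h2⟩
  · exact ⟨b, a, Sym2.eq_swap.symm, h2, h1⟩

theorem comps_identify (G : Multigraph) (r0 : G.V → G.V → Prop) (A : Finset G.E) :
    (G.identify r0).comps A = nc (fun a b => eRel G A a b ∨ r0 a b) := by
  rw [comps_eq_nc (G.identify r0) A]
  set tgt : G.V → G.V → Prop := fun a b => eRel G A a b ∨ r0 a b with htgt
  refine Nat.card_congr
    (⟨Quot.lift (Quot.lift (Quot.mk tgt) (fun a b (hab : EqvGen r0 a b) =>
        Quot.eqvGen_sound (hab.mono (fun x y hxy => Or.inr hxy)))) ?_,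
      Quot.lift (fun a => Quot.mk _ (Quotient.mk _ a)) ?_, ?_, ?_⟩ :
      Quot (eRel (G.identify r0) A) ≃ Quot tgt)
  · rintro x y ⟨e, he, hmap⟩
    obtain ⟨a, b, hab, hfa, hfb⟩ := sym2_map_eq hmap
    subst hfa; subst hfb
    exact Quot.sound (Or.inl ⟨e, he, hab⟩)
  · rintro a b (hab | hab)
    · apply Quot.sound
      obtain ⟨e, he, hab⟩ := hab
      exact ⟨e, he, by
        rw [show (G.identify r0).ends e = Sym2.map (Quotient.mk _) (G.ends e) from rfl,
          hab, Sym2.map_pair_eq]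
        rfl⟩
    · exact congrArg _ (Quot.sound (EqvGen.rel _ _ hab))
  · intro q
    induction q using Quot.ind with | _ x =>
    induction x using Quot.ind with | _ a =>
    rfl
  · intro q
    induction q using Quot.ind with | _ a =>
    rfl

section FinsetSum

variable {γ δ : Type} [DecidableEq γ] [DecidableEq δ]

def finsetSum (P : Finset γ) (Q : Finset δ) : Finset (γ ⊕ δ) :=
  P.map ⟨Sum.inl, Sum.inl_injective⟩ ∪ Q.map ⟨Sum.inr, Sum.inr_injective⟩

theorem mem_finsetSum_inl {P : Finset γ} {Q : Finset δ} {e : γ} :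
    Sum.inl e ∈ finsetSum P Q ↔ e ∈ P := by
  simp [finsetSum]

theorem mem_finsetSum_inr {P : Finset γ} {Q : Finset δ} {e : δ} :
    Sum.inr e ∈ finsetSum P Q ↔ e ∈ Q := by
  simp [finsetSum]

theorem card_finsetSum (P : Finset γ) (Q : Finset δ) :
    (finsetSum P Q).card = P.card + Q.card := by
  rw [finsetSum, Finset.card_union_of_disjoint, Finset.card_map, Finset.card_map]
  simp [Finset.disjoint_left]

theorem sum_finset_sum_type [Fintype γ] [Fintype δ]
    {M : Type} [AddCommMonoid M] (f : Finset (γ ⊕ δ) → M) :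
    ∑ A : Finset (γ ⊕ δ), f A = ∑ P : Finset γ, ∑ Q : Finset δ, f (finsetSum P Q) := by
  have hbij : Function.Bijective (fun PQ : Finset γ × Finset δ => finsetSum PQ.1 PQ.2) := by
    constructor
    · intro PQ PQ' h
      dsimp only at h
      have h1 : PQ.1 = PQ'.1 := by
        ext e; rw [← mem_finsetSum_inl (Q := PQ.2), h, mem_finsetSum_inl]
      have h2 : PQ.2 = PQ'.2 := by
        ext e; rw [← mem_finsetSum_inr (P := PQ.1), h, mem_finsetSum_inr]
      exact Prod.ext h1 h2
    · intro A
      refine ⟨(A.preimage Sum.inl Sum.inl_injective.injOn,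
               A.preimage Sum.inr Sum.inr_injective.injOn), ?_⟩
      ext x
      rcases x with e | e
      · simp [mem_finsetSum_inl, Finset.mem_preimage]
      · simp [mem_finsetSum_inr, Finset.mem_preimage]
  calc ∑ A : Finset (γ ⊕ δ), f A
      = ∑ PQ : Finset γ × Finset δ, f (finsetSum PQ.1 PQ.2) :=
        (Fintype.sum_bijective _ hbij _ f (fun PQ => rfl)).symm
    _ = ∑ P : Finset γ, ∑ Q : Finset δ, f (finsetSum P Q) := Fintype.sum_prod_type _

end FinsetSum

theorem eRel_glue_or (G W : Multigraph) {k : ℕ} (u : Fin k → G.V) (w : Fin k → W.V)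
    (P : Finset G.E) (Q : Finset W.E) (x y : G.V ⊕ W.V) :
    (eRel (G.disjUnion W) (finsetSum P Q) x y ∨ (∃ i, x = Sum.inl (u i) ∧ y = Sum.inr (w i)))
      ↔ sumRel (eRel G P) (eRel W Q) u w x y := by
  have hends_l : ∀ e : G.E, (G.disjUnion W).ends (Sum.inl e) = Sym2.map Sum.inl (G.ends e) :=
    fun e => rfl
  have hends_r : ∀ e : W.E, (G.disjUnion W).ends (Sum.inr e) = Sym2.map Sum.inr (W.ends e) :=
    fun e => rfl
  rcases x with a | b <;> rcases y with a' | b'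
  · show _ ↔ eRel G P a a'
    constructor
    · rintro (⟨e, he, hmap⟩ | ⟨i, hi, hi'⟩)
      · rcases e with e | f
        · rw [hends_l] at hmap
          obtain ⟨a₀, b₀, hab, h1, h2⟩ := sym2_map_eq hmap
          rcases Sum.inl.inj h1 with rfl
          rcases Sum.inl.inj h2 with rfl
          exact ⟨e, (mem_finsetSum_inl).1 he, hab⟩
        · rw [hends_r] at hmap
          obtain ⟨a₀, b₀, hab, h1, h2⟩ := sym2_map_eq hmap
          exact absurd h1 (by simp)
      · exact absurd hi' (by simp)
    · rintro ⟨e, he, hab⟩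
      exact Or.inl ⟨Sum.inl e, (mem_finsetSum_inl).2 he, by rw [hends_l, hab, Sym2.map_pair_eq]; rfl⟩
  · show _ ↔ ∃ i, a = u i ∧ b' = w i
    constructor
    · rintro (⟨e, he, hmap⟩ | ⟨i, hi, hi'⟩)
      · rcases e with e | f
        · rw [hends_l] at hmap
          obtain ⟨a₀, b₀, hab, h1, h2⟩ := sym2_map_eq hmap
          exact absurd h2 (by simp)
        · rw [hends_r] at hmap
          obtain ⟨a₀, b₀, hab, h1, h2⟩ := sym2_map_eq hmap
          exact absurd h1 (by simp)
      · exact ⟨i, Sum.inl.inj hi, Sum.inr.inj hi'⟩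
    · rintro ⟨i, rfl, rfl⟩
      exact Or.inr ⟨i, rfl, rfl⟩
  · show _ ↔ False
    constructor
    · rintro (⟨e, he, hmap⟩ | ⟨i, hi, hi'⟩)
      · rcases e with e | f
        · rw [hends_l] at hmap
          obtain ⟨a₀, b₀, hab, h1, h2⟩ := sym2_map_eq hmap
          exact absurd h1 (by simp)
        · rw [hends_r] at hmap
          obtain ⟨a₀, b₀, hab, h1, h2⟩ := sym2_map_eq hmap
          exact absurd h2 (by simp)
      · exact absurd hi (by simp)
    · exact False.elim
  · show _ ↔ eRel W Q b b'
    constructor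
    · rintro (⟨e, he, hmap⟩ | ⟨i, hi, hi'⟩)
      · rcases e with e | f
        · rw [hends_l] at hmap
          obtain ⟨a₀, b₀, hab, h1, h2⟩ := sym2_map_eq hmap
          exact absurd h1 (by simp)
        · rw [hends_r] at hmap
          obtain ⟨a₀, b₀, hab, h1, h2⟩ := sym2_map_eq hmap
          rcases Sum.inr.inj h1 with rfl
          rcases Sum.inr.inj h2 with rfl
          exact ⟨f, (mem_finsetSum_inr).1 he, hab⟩
      · exact absurd hi (by simp)
    · rintro ⟨e, he, hab⟩
      exact Or.inl ⟨Sum.inr e, (mem_finsetSum_inr).2 he, by rw [hends_r, hab, Sym2.map_pair_eq]; rfl⟩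

theorem comps_glue (G W : Multigraph) {k : ℕ} (u : Fin k → G.V) (w : Fin k → W.V)
    (P : Finset G.E) (Q : Finset W.E) :
    (G.glue W u w).comps (finsetSum P Q)
        + nc (fun i j : Fin k => EqvGen (eRel G P) (u i) (u j))
      = nc (eRel G P) + nc (fun b b' : W.V => eRel W Q b b' ∨
          ∃ i j, EqvGen (eRel G P) (u i) (u j) ∧ b = w i ∧ b' = w j) := by
  have h0 : (G.glue W u w).comps (finsetSum P Q)
      = nc (fun a b => eRel (G.disjUnion W) (finsetSum P Q) a b ∨
          (∃ i, a = Sum.inl (u i) ∧ b = Sum.inr (w i))) :=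
    comps_identify (G.disjUnion W) _ (finsetSum P Q)
  have h1 : (G.glue W u w).comps (finsetSum P Q)
      = nc (sumRel (eRel G P) (eRel W Q) u w) :=
    h0.trans (nc_congr (eRel_glue_or G W u w P Q))
  rw [h1]
  exact glCount _ _ _ _

end TutteAux
namespace TutteAux
open Relation

variable {α β ι : Type}

theorem nc_eqvGen (r : α → α → Prop) : nc (EqvGen r) = nc r :=
  nc_congr_eqvGen (fun a b => ⟨fun h => eqvGen_idem h, fun h => h.mono (fun x y h' => EqvGen.rel _ _ h')⟩)

theorem eqvGen_push {ρ : ι → ι → Prop} {m : ι → α} {base : α → α → Prop}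
    {i j : ι} (h : EqvGen ρ i j) :
    EqvGen (fun b b' => base b b' ∨ ∃ i' j', ρ i' j' ∧ b = m i' ∧ b' = m j') (m i) (m j) := by
  induction h with
  | rel x y hxy => exact EqvGen.rel _ _ (Or.inr ⟨x, y, hxy, rfl, rfl⟩)
  | refl x => exact EqvGen.refl _
  | symm x y _ ih => exact ih.symm _ _
  | trans x y z _ _ ih1 ih2 => exact ih1.trans _ _ _ ih2

theorem nc_sumRel_comm (r : α → α → Prop) (s : β → β → Prop) (u : ι → α) (w : ι → β) :
    nc (sumRel r s u w) = nc (sumRel s r w u) := by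
  rw [← nc_equiv (Equiv.sumComm β α) (sumRel r s u w)]
  apply nc_congr_eqvGen
  intro x y
  constructor
  · intro h
    refine eqvGen_of_gen ?_ h
    rintro (b | a) (b' | a') hg
    · exact EqvGen.rel _ _ (show sumRel s r w u (Sum.inl b) (Sum.inl b') from hg)
    · exact (hg : False).elim
    · obtain ⟨i, ha, hb⟩ := (hg : ∃ i, a = u i ∧ b' = w i)
      exact (EqvGen.rel (Sum.inl b') (Sum.inr a)
        (show sumRel s r w u (Sum.inl b') (Sum.inr a) from ⟨i, hb, ha⟩)).symm _ _
    · exact EqvGen.rel _ _ (show sumRel s r w u (Sum.inr a) (Sum.inr a') from hg)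
  · intro h
    refine eqvGen_of_gen ?_ h
    rintro (b | a) (b' | a') hg
    · exact EqvGen.rel _ _ (show sumRel r s u w (Sum.inr b) (Sum.inr b') from hg)
    · obtain ⟨i, hb, ha⟩ := (hg : ∃ i, b = w i ∧ a' = u i)
      exact (EqvGen.rel (Sum.inr a') (Sum.inl b)
        (show sumRel r s u w (Sum.inl a') (Sum.inr b) from ⟨i, ha, hb⟩)).symm _ _
    · exact (hg : False).elim
    · exact EqvGen.rel _ _ (show sumRel r s u w (Sum.inl a) (Sum.inl a') from hg)

/-- decomposition of the component count when a family of points `m i` is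
linked according to an arbitrary relation `ρ` on the index type -/
theorem nc_pull [Finite α] [Finite ι] (base : α → α → Prop) (m : ι → α) (ρ : ι → ι → Prop) :
    nc (fun b b' : α => base b b' ∨ ∃ i j, ρ i j ∧ b = m i ∧ b' = m j)
        + nc (fun i j : ι => EqvGen base (m i) (m j))
      = nc base + nc (fun i j : ι => ρ i j ∨ EqvGen base (m i) (m j)) := by
  classical
  -- orientation 1 : α := ι with relation ρ
  have O1 := glCount (α := ι) (β := α) ρ base (fun i => i) m
  have hid : nc (fun i j : ι => EqvGen ρ i j) = nc ρ := nc_eqvGen ρ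
  -- orientation 2 : α := α with relation base
  have O2 := glCount (α := α) (β := ι) base ρ m (fun i => i)
  -- identifications
  have e1 : nc (fun b b' : α => base b b' ∨ ∃ i j, ρ i j ∧ b = m i ∧ b' = m j)
      = nc (fun b b' : α => base b b' ∨ ∃ i j, EqvGen ρ i j ∧ b = m i ∧ b' = m j) := by
    apply nc_congr_eqvGen
    intro a b
    constructor
    · intro h
      refine eqvGen_of_gen ?_ h
      rintro x y (hxy | ⟨i, j, hij, rfl, rfl⟩)
      · exact EqvGen.rel _ _ (Or.inl hxy)
      · exact EqvGen.rel _ _ (Or.inr ⟨i, j, EqvGen.rel _ _ hij, rfl, rfl⟩)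
    · intro h
      refine eqvGen_of_gen ?_ h
      rintro x y (hxy | ⟨i, j, hij, rfl, rfl⟩)
      · exact EqvGen.rel _ _ (Or.inl hxy)
      · exact eqvGen_push hij
  have e2 : nc (sumRel ρ base (fun i => i) m) = nc (sumRel base ρ m (fun i => i)) :=
    nc_sumRel_comm _ _ _ _
  have e3 : nc (fun i j : ι => ρ i j ∨ ∃ i' j',
        EqvGen base (m i') (m j') ∧ i = i' ∧ j = j')
      = nc (fun i j : ι => ρ i j ∨ EqvGen base (m i) (m j)) := by
    apply nc_congr
    intro i j
    constructor
    · rintro (h | ⟨i', j', h, rfl, rfl⟩)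
      · exact Or.inl h
      · exact Or.inr h
    · rintro (h | h)
      · exact Or.inl h
      · exact Or.inr ⟨i, j, h, rfl, rfl⟩
  rw [hid] at O1
  have h1 : nc (sumRel ρ base (fun i => i) m)
      = nc (fun b b' => base b b' ∨ ∃ i j, EqvGen ρ i j ∧ b = m i ∧ b' = m j) := by omega
  rw [e1, ← h1, e2]
  rw [e3] at O2
  exact O2

end TutteAux
namespace TutteAux
open Relation

variable {α β ι : Type}

theorem reachable_iff_eqvGen_eRel (G : Multigraph) (A : Finset G.E) (a b : G.V) :
    (G.spanning A).Reachable a b ↔ EqvGen (eRel G A) a b := by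
  constructor
  · intro h
    rw [reachable_iff_eqvGen] at h
    refine eqvGen_of_gen (fun x' y' hxy' => ?_) h
    simp only [Multigraph.spanning, SimpleGraph.fromRel_adj] at hxy'
    rcases hxy'.2 with h' | h'
    · exact EqvGen.rel _ _ h'
    · exact (EqvGen.rel _ _ h').symm _ _
  · intro h
    rw [reachable_iff_eqvGen]
    refine eqvGen_of_gen (fun x y hxy => ?_) h
    by_cases hxy' : x = y
    · subst hxy'
      exact EqvGen.refl x
    · exact EqvGen.rel _ _ (by
        simp only [Multigraph.spanning, SimpleGraph.fromRel_adj]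
        exact ⟨hxy', Or.inl hxy⟩)

theorem card_glue_V (G W : Multigraph) {k : ℕ} (u : Fin k → G.V) (w : Fin k → W.V)
    (hw : Function.Injective w) :
    Nat.card (G.glue W u w).V + k = Fintype.card G.V + Fintype.card W.V := by
  classical
  set gr : G.V ⊕ W.V → G.V ⊕ W.V → Prop :=
    fun a b => ∃ i, a = Sum.inl (u i) ∧ b = Sum.inr (w i) with hgr
  set F : G.V ⊕ W.V → G.V ⊕ {b : W.V // ¬ ∃ i, b = w i} := fun x =>
    match x with
    | Sum.inl a => Sum.inl a
    | Sum.inr b => if h : ∃ i, b = w i then Sum.inl (u h.choose) else Sum.inr ⟨b, h⟩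
    with hFdef
  have hgen : ∀ x y, gr x y → F x = F y := by
    rintro x y ⟨i, rfl, rfl⟩
    have h : ∃ j, w i = w j := ⟨i, rfl⟩
    have : h.choose = i := hw h.choose_spec.symm
    simp only [hFdef, dif_pos h, this]
  have hresp : ∀ x y, EqvGen gr x y → F x = F y := by
    intro x y h
    induction h with
    | rel x y hxy => exact hgen x y hxy
    | refl x => rfl
    | symm x y _ ih => exact ih.symm
    | trans x y z _ _ ih1 ih2 => exact ih1.trans ih2
  have e : (G.glue W u w).V ≃ G.V ⊕ {b : W.V // ¬ ∃ i, b = w i} := by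
    refine ⟨Quot.lift F hresp, Sum.elim (fun a => Quot.mk _ (Sum.inl a))
      (fun c => Quot.mk _ (Sum.inr c.1)), ?_, ?_⟩
    · intro q
      induction q using Quot.ind with | _ x =>
      rcases x with a | b
      · rfl
      · by_cases h : ∃ i, b = w i
        · have hF : F (Sum.inr b) = Sum.inl (u h.choose) := by
            simp only [hFdef, dif_pos h]
          show Sum.elim _ _ (Quot.lift F hresp (Quot.mk _ (Sum.inr b))) = _
          rw [show Quot.lift F hresp (Quot.mk _ (Sum.inr b)) = F (Sum.inr b) from rfl, hF]
          show Quot.mk _ (Sum.inl (u h.choose)) = Quot.mk _ (Sum.inr b)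
          have key : ∀ j : Fin k, b = w j →
              (Quot.mk _ (Sum.inl (u j)) : (G.glue W u w).V) = Quot.mk _ (Sum.inr b) := by
            rintro j rfl
            exact Quot.sound (EqvGen.rel _ _ ⟨j, rfl, rfl⟩)
          exact key h.choose h.choose_spec
        · have hF : F (Sum.inr b) = Sum.inr ⟨b, h⟩ := by
            simp only [hFdef, dif_neg h]
          show Sum.elim _ _ (Quot.lift F hresp (Quot.mk _ (Sum.inr b))) = _
          rw [show Quot.lift F hresp (Quot.mk _ (Sum.inr b)) = F (Sum.inr b) from rfl, hF]
          rfl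
    · rintro (a | ⟨b, hb⟩)
      · rfl
      · show F (Sum.inr b) = _
        simp only [hFdef, dif_neg hb]
  have h1 : Nat.card (G.glue W u w).V
      = Fintype.card G.V + Nat.card {b : W.V // ¬ ∃ i, b = w i} := by
    rw [Nat.card_congr e, Nat.card_sum, Nat.card_eq_fintype_card]
  have h2 : Nat.card {b : W.V // ∃ i, b = w i} = k := by
    have e2 : Fin k ≃ {b : W.V // ∃ i, b = w i} := by
      refine ⟨fun i => ⟨w i, ⟨i, rfl⟩⟩, fun c => c.2.choose, ?_, ?_⟩
      · intro i
        exact hw ((⟨i, rfl⟩ : ∃ j, w i = w j).choose_spec).symm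
      · rintro ⟨b, hb⟩
        exact Subtype.ext hb.choose_spec.symm
    simpa using (Nat.card_congr e2).symm
  have h3 : Nat.card {b : W.V // ∃ i, b = w i} + Nat.card {b : W.V // ¬ ∃ i, b = w i}
      = Fintype.card W.V := by
    rw [← Nat.card_sum, Nat.card_congr (Equiv.sumCompl _), Nat.card_eq_fintype_card]
  simp [Nat.card_eq_fintype_card] at h1 h2 h3 ⊢
  omega

theorem comps_addEdges (G : Multigraph) (n : Type) [Fintype n] [DecidableEq n]
    (f : n → Sym2 G.V) (P : Finset G.E) (Q : Finset n) :
    (G.addEdges n f).comps (finsetSum P Q)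
      = nc (fun a b => eRel G P a b ∨ ∃ p ∈ Q, f p = s(a, b)) := by
  rw [comps_eq_nc (G.addEdges n f) (finsetSum P Q)]
  apply nc_congr
  intro a b
  constructor
  · rintro ⟨e, he, hab⟩
    rcases e with e | p
    · exact Or.inl ⟨e, (mem_finsetSum_inl).1 he, hab⟩
    · exact Or.inr ⟨p, (mem_finsetSum_inr).1 he, hab⟩
  · rintro (⟨e, he, hab⟩ | ⟨p, hp, hab⟩)
    · exact ⟨Sum.inl e, (mem_finsetSum_inl).2 he, hab⟩
    · exact ⟨Sum.inr p, (mem_finsetSum_inr).2 hp, hab⟩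

theorem comps_addEdges_u (G : Multigraph) {k : ℕ} (u : Fin k → G.V)
    (S : Finset (Sym2 (Fin k))) (P : Finset G.E) (Q : Finset {p // p ∈ S}) :
    (G.addEdges {p // p ∈ S} (fun p => Sym2.map u p.1)).comps (finsetSum P Q)
        + nc (fun i j : Fin k => EqvGen (eRel G P) (u i) (u j))
      = nc (eRel G P)
        + nc (fun i j : Fin k => (∃ p ∈ Q, p.1 = s(i, j)) ∨ EqvGen (eRel G P) (u i) (u j)) := by
  rw [comps_addEdges]
  have h : nc (fun a b => eRel G P a b ∨ ∃ p ∈ Q, Sym2.map u p.1 = s(a, b))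
      = nc (fun a b => eRel G P a b ∨
          ∃ i j, (∃ p ∈ Q, p.1 = s(i, j)) ∧ a = u i ∧ b = u j) := by
    apply nc_congr
    intro a b
    constructor
    · rintro (h | ⟨p, hp, hmap⟩)
      · exact Or.inl h
      · obtain ⟨i, j, hij, h1, h2⟩ := sym2_map_eq hmap
        exact Or.inr ⟨i, j, ⟨p, hp, hij⟩, h1.symm, h2.symm⟩
    · rintro (h | ⟨i, j, ⟨p, hp, hps⟩, rfl, rfl⟩)
      · exact Or.inl h
      · exact Or.inr ⟨p, hp, by rw [hps, Sym2.map_pair_eq]⟩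
  rw [h]
  exact nc_pull _ _ _

theorem connected_comps_univ (G : Multigraph) (hG : G.Connected) :
    G.comps Finset.univ = 1 := by
  have h1 : Subsingleton (G.spanning Finset.univ).ConnectedComponent := by
    constructor
    intro c c'
    induction c using SimpleGraph.ConnectedComponent.ind with | _ a =>
    induction c' using SimpleGraph.ConnectedComponent.ind with | _ b =>
    exact SimpleGraph.ConnectedComponent.sound (hG.preconnected a b)
  have h2 : Nonempty (G.spanning Finset.univ).ConnectedComponent := by
    obtain ⟨a⟩ := hG.nonempty
    exact ⟨(G.spanning Finset.univ).connectedComponentMk a⟩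
  exact Nat.card_of_subsingleton (Classical.arbitrary _)

theorem prel_univ_top (G : Multigraph) (hG : G.Connected) {k : ℕ} (u : Fin k → G.V)
    (i j : Fin k) : EqvGen (eRel G Finset.univ) (u i) (u j) :=
  (reachable_iff_eqvGen_eRel G Finset.univ _ _).1 (hG.preconnected (u i) (u j))

theorem finsetSum_univ {γ δ : Type} [DecidableEq γ] [DecidableEq δ] [Fintype γ] [Fintype δ] :
    finsetSum (Finset.univ : Finset γ) (Finset.univ : Finset δ) = Finset.univ := by
  ext x
  rcases x with e | e <;> simp [mem_finsetSum_inl, mem_finsetSum_inr]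

end TutteAux
namespace TutteAux
open Relation MvPolynomial

variable {α β ι : Type}

theorem nc_pulled_le [Finite α] (base : α → α → Prop) (m : ι → α) :
    nc (fun i j : ι => EqvGen base (m i) (m j)) ≤ nc base := by
  have : Finite (Quot base) := Finite.of_surjective (Quot.mk base) Quot.mk_surjective
  apply Nat.card_le_card_of_injective
    (Quot.lift (fun i => Quot.mk base (m i))
      (fun i j (hij : EqvGen base (m i) (m j)) => Quot.eqvGen_sound hij))
  intro q q' h
  induction q using Quot.ind with | _ i =>
  induction q' using Quot.ind with | _ j =>
  exact Quot.eqvGen_sound (r := fun i j => EqvGen base (m i) (m j))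
    (EqvGen.rel _ _ (Quot.eqvGen_exact h))

noncomputable def Qp : MvPolynomial (Fin 2) ℤ := (X 0 - 1) * (X 1 - 1)
noncomputable def Vp : MvPolynomial (Fin 2) ℤ := X 1 - 1

theorem X0_sub_one_ne_zero : (X 0 - 1 : MvPolynomial (Fin 2) ℤ) ≠ 0 := by
  intro h
  have := congrArg constantCoeff h
  simp [map_sub, constantCoeff_X] at this

theorem X1_sub_one_ne_zero : (X 1 - 1 : MvPolynomial (Fin 2) ℤ) ≠ 0 := by
  intro h
  have := congrArg constantCoeff h
  simp [map_sub, constantCoeff_X] at this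

theorem Vp_ne_zero : (Vp : MvPolynomial (Fin 2) ℤ) ≠ 0 := X1_sub_one_ne_zero

noncomputable def Zp (G : Multigraph) : MvPolynomial (Fin 2) ℤ :=
  ∑ A : Finset G.E, Qp ^ (G.comps A) * Vp ^ A.card

theorem pow_juggle {R : Type} [CommRing R] (a b : R) {c n cA cardA : ℕ}
    (h1 : c ≤ cA) (h2 : cA ≤ n) (h3 : n ≤ cardA + cA) :
    a ^ c * b ^ n * (a ^ (cA - c) * b ^ (cardA + cA - n)) = (a * b) ^ cA * b ^ cardA := by
  have e1 : c + (cA - c) = cA := by omega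
  have e2 : n + (cardA + cA - n) = cA + cardA := by omega
  calc a ^ c * b ^ n * (a ^ (cA - c) * b ^ (cardA + cA - n))
      = (a ^ c * a ^ (cA - c)) * (b ^ n * b ^ (cardA + cA - n)) := by ring
    _ = a ^ cA * b ^ (cA + cardA) := by rw [← pow_add, ← pow_add, e1, e2]
    _ = (a * b) ^ cA * b ^ cardA := by rw [mul_pow, pow_add]; ring

/-- conversion between the Tutte polynomial and the Whitney-type sum `Zp` -/
theorem conv (G : Multigraph) :
    (X 0 - 1) ^ (G.comps Finset.univ) * (X 1 - 1) ^ (Fintype.card G.V) * G.tutte = Zp G := by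
  rw [Multigraph.tutte, Finset.mul_sum, Zp]
  apply Finset.sum_congr rfl
  intro A _
  have hcE := comps_mono G (Finset.subset_univ A)
  have hle := comps_le_card G A
  have hle' := comps_le_card G Finset.univ
  have hA := card_le_comps_add G A
  have e1 : G.rk Finset.univ - G.rk A = G.comps A - G.comps Finset.univ := by
    rw [Multigraph.rk, Multigraph.rk]; omega
  have e2 : A.card - G.rk A = A.card + G.comps A - Fintype.card G.V := by
    rw [Multigraph.rk]; omega
  rw [e1, e2, Qp, Vp]
  exact pow_juggle _ _ hcE hle hA

/-- the partition-refined generating polynomial -/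
noncomputable def prel (G : Multigraph) {k : ℕ} (u : Fin k → G.V) (A : Finset G.E) :
    Fin k → Fin k → Prop :=
  fun i j => EqvGen (eRel G A) (u i) (u j)

noncomputable def Ys (G : Multigraph) {k : ℕ} (u : Fin k → G.V)
    (τ : Fin k → Fin k → Prop) : MvPolynomial (Fin 2) ℤ :=
  ∑ A : Finset G.E,
    Qp ^ ((nc (eRel G A) - nc (prel G u A)) + nc (fun i j => τ i j ∨ prel G u A i j))
      * Vp ^ A.card

theorem Ys_congr (G : Multigraph) {k : ℕ} (u : Fin k → G.V)
    {τ τ' : Fin k → Fin k → Prop}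
    (h1 : ∀ i j, τ i j → i = j ∨ τ' i j) (h2 : ∀ i j, τ' i j → τ i j) :
    Ys G u τ = Ys G u τ' := by
  apply Finset.sum_congr rfl
  intro A _
  have : nc (fun i j => τ i j ∨ prel G u A i j)
      = nc (fun i j => τ' i j ∨ prel G u A i j) := by
    apply nc_congr_eqvGen
    intro i j
    constructor
    · refine eqvGen_of_gen ?_
      rintro x y (hxy | hxy)
      · rcases h1 x y hxy with rfl | hxy'
        · exact EqvGen.refl _
        · exact EqvGen.rel _ _ (Or.inl hxy')
      · exact EqvGen.rel _ _ (Or.inr hxy)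
    · refine eqvGen_of_gen ?_
      rintro x y (hxy | hxy)
      · exact EqvGen.rel _ _ (Or.inl (h2 x y hxy))
      · exact EqvGen.rel _ _ (Or.inr hxy)
  rw [this]

/-- decomposition of the Whitney sum of a glued graph -/
theorem Zp_glue (G W : Multigraph) {k : ℕ} (u : Fin k → G.V) (w : Fin k → W.V) :
    Zp (G.glue W u w) = ∑ B : Finset W.E,
      Qp ^ (nc (eRel W B) - nc (prel W w B)) * Vp ^ B.card * Ys G u (prel W w B) := by
  rw [Zp]
  have expand : (∑ A : Finset (G.glue W u w).E, Qp ^ ((G.glue W u w).comps A) * Vp ^ A.card)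
      = ∑ A : Finset G.E, ∑ B : Finset W.E,
          Qp ^ ((G.glue W u w).comps (finsetSum A B)) * Vp ^ (finsetSum A B).card :=
    sum_finset_sum_type (γ := G.E) (δ := W.E) _
  rw [expand, Finset.sum_comm]
  apply Finset.sum_congr rfl
  intro B _
  rw [Ys, Finset.mul_sum]
  apply Finset.sum_congr rfl
  intro A _
  have key' : (G.glue W u w).comps (finsetSum A B) + nc (prel G u A)
      = nc (eRel G A) + nc (fun b b' : W.V => eRel W B b b' ∨
          ∃ i j, prel G u A i j ∧ b = w i ∧ b' = w j) := comps_glue G W u w A B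
  have pull' : nc (fun b b' : W.V => eRel W B b b' ∨
        ∃ i j, prel G u A i j ∧ b = w i ∧ b' = w j) + nc (prel W w B)
      = nc (eRel W B) + nc (fun i j => prel G u A i j ∨ prel W w B i j) :=
    nc_pull (eRel W B) w (prel G u A)
  have le1' : nc (prel G u A) ≤ nc (eRel G A) := nc_pulled_le _ _
  have le2' : nc (prel W w B) ≤ nc (eRel W B) := nc_pulled_le _ _
  have hjoin : nc (fun i j => prel G u A i j ∨ prel W w B i j)
      = nc (fun i j => prel W w B i j ∨ prel G u A i j) :=
    nc_congr (fun i j => or_comm)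
  have hexp : (G.glue W u w).comps (finsetSum A B)
      = (nc (eRel W B) - nc (prel W w B)) + ((nc (eRel G A) - nc (prel G u A))
          + nc (fun i j => prel W w B i j ∨ prel G u A i j)) := by omega
  rw [card_finsetSum, hexp, pow_add, pow_add]
  ring

/-- decomposition of the Whitney sum of `G` with added edges on the `u i` -/
theorem Zp_addEdges (G : Multigraph) {k : ℕ} (u : Fin k → G.V)
    (S : Finset (Sym2 (Fin k))) :
    Zp (G.addEdges {p // p ∈ S} (fun p => Sym2.map u p.1))
      = ∑ Q : Finset {p // p ∈ S},
          Vp ^ Q.card * Ys G u (fun i j => ∃ p ∈ Q, p.1 = s(i, j)) := by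
  rw [Zp]
  have expand : (∑ A : Finset (G.addEdges {p // p ∈ S} (fun p => Sym2.map u p.1)).E,
        Qp ^ ((G.addEdges {p // p ∈ S} (fun p => Sym2.map u p.1)).comps A) * Vp ^ A.card)
      = ∑ A : Finset G.E, ∑ Q : Finset {p // p ∈ S},
          Qp ^ ((G.addEdges {p // p ∈ S} (fun p => Sym2.map u p.1)).comps (finsetSum A Q))
            * Vp ^ (finsetSum A Q).card :=
    sum_finset_sum_type (γ := G.E) (δ := {p // p ∈ S}) _
  rw [expand, Finset.sum_comm]
  apply Finset.sum_congr rfl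
  intro Q _
  rw [Ys, Finset.mul_sum]
  apply Finset.sum_congr rfl
  intro A _
  have key' : (G.addEdges {p // p ∈ S} (fun p => Sym2.map u p.1)).comps (finsetSum A Q)
        + nc (prel G u A)
      = nc (eRel G A)
        + nc (fun i j => (∃ p ∈ Q, p.1 = s(i, j)) ∨ prel G u A i j) :=
    comps_addEdges_u G u S A Q
  have le1' : nc (prel G u A) ≤ nc (eRel G A) := nc_pulled_le _ _
  have hexp : (G.addEdges {p // p ∈ S} (fun p => Sym2.map u p.1)).comps (finsetSum A Q)
      = Q.card - Q.card + ((nc (eRel G A) - nc (prel G u A))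
          + nc (fun i j => (∃ p ∈ Q, p.1 = s(i, j)) ∨ prel G u A i j)) := by omega
  rw [card_finsetSum, hexp]
  simp only [Nat.sub_self, pow_zero, pow_add]
  ring

end TutteAux
namespace TutteAux
open Relation MvPolynomial

variable {α β ι : Type}

theorem neg_one_pow_sum {M γ : Type} [CommRing M] [DecidableEq γ] (x : Finset γ) :
    (∑ m ∈ x.powerset, (-1 : M) ^ m.card) = if x = ∅ then 1 else 0 := by
  have h := Finset.sum_powerset_neg_one_pow_card (x := x)
  have h2 : ((Int.castRingHom M) (∑ m ∈ x.powerset, (-1 : ℤ) ^ m.card))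
      = ∑ m ∈ x.powerset, (-1 : M) ^ m.card := by
    rw [map_sum]
    apply Finset.sum_congr rfl
    intro m _
    rw [map_pow, map_neg, map_one]
  rw [← h2, h]
  split <;> simp

theorem incl_excl {M γ : Type} [CommRing M] [DecidableEq γ] (T : Finset γ)
    (g : Finset γ → M) :
    ∑ S ∈ T.powerset, (-1 : M) ^ (T.card - S.card) * ∑ S' ∈ S.powerset, g S' = g T := by
  have step1 : ∑ S ∈ T.powerset, (-1 : M) ^ (T.card - S.card) * ∑ S' ∈ S.powerset, g S'
      = ∑ S ∈ T.powerset, ∑ S' ∈ S.powerset, (-1 : M) ^ (T.card - S.card) * g S' := by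
    apply Finset.sum_congr rfl
    intro S _
    rw [Finset.mul_sum]
  rw [step1]
  rw [Finset.sum_comm' (s' := fun S' => T.powerset.filter (fun S => S' ⊆ S))
    (t' := T.powerset) (by
      intro S S'
      simp only [Finset.mem_powerset, Finset.mem_filter]
      constructor
      · rintro ⟨h1, h2⟩
        exact ⟨⟨h1, h2⟩, h2.trans h1⟩
      · rintro ⟨⟨h1, h2⟩, _⟩
        exact ⟨h1, h2⟩)]
  have inner : ∀ S' ∈ T.powerset,
      ∑ S ∈ T.powerset.filter (fun S => S' ⊆ S), (-1 : M) ^ (T.card - S.card) * g S'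
        = (-1 : M) ^ (T.card - S'.card)
            * (if T \ S' = ∅ then (1 : M) else 0) * g S' := by
    intro S' hS'
    rw [Finset.mem_powerset] at hS'
    have reindex : ∑ S ∈ T.powerset.filter (fun S => S' ⊆ S),
          (-1 : M) ^ (T.card - S.card) * g S'
        = ∑ U ∈ (T \ S').powerset, (-1 : M) ^ (T.card - (S'.card + U.card)) * g S' := by
      refine Finset.sum_bij' (fun S _ => S \ S') (fun U _ => S' ∪ U) ?_ ?_ ?_ ?_ ?_
      · intro S hS
        rw [Finset.mem_filter, Finset.mem_powerset] at hS
        rw [Finset.mem_powerset]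
        exact Finset.sdiff_subset_sdiff hS.1 (le_refl S')
      · intro U hU
        rw [Finset.mem_powerset] at hU
        rw [Finset.mem_filter, Finset.mem_powerset]
        exact ⟨Finset.union_subset hS' (hU.trans (Finset.sdiff_subset)),
          Finset.subset_union_left⟩
      · intro S hS
        rw [Finset.mem_filter] at hS
        exact Finset.union_sdiff_of_subset hS.2
      · intro U hU
        rw [Finset.mem_powerset] at hU
        have hdisj : Disjoint S' U :=
          Finset.disjoint_left.mpr (fun a ha ha' => (Finset.mem_sdiff.1 (hU ha')).2 ha)
        show (S' ∪ U) \ S' = U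
        rw [Finset.union_sdiff_cancel_left hdisj]
      · intro S hS
        rw [Finset.mem_filter, Finset.mem_powerset] at hS
        congr 2
        rw [Finset.card_sdiff_of_subset hS.2]
        have := Finset.card_le_card hS.1
        have := Finset.card_le_card hS.2
        omega
    rw [reindex]
    have hsign : ∀ U ∈ (T \ S').powerset,
        (-1 : M) ^ (T.card - (S'.card + U.card)) * g S'
          = (-1 : M) ^ (T.card - S'.card) * ((-1 : M) ^ U.card * g S') := by
      intro U hU
      rw [Finset.mem_powerset] at hU
      have hUcard : U.card ≤ T.card - S'.card := by
        have h1 := Finset.card_le_card hU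
        rw [Finset.card_sdiff_of_subset hS'] at h1
        exact h1
      have hScard := Finset.card_le_card hS'
      have key : (-1 : M) ^ (T.card - (S'.card + U.card)) * (-1) ^ U.card
          = (-1 : M) ^ (T.card - S'.card) := by
        rw [← pow_add]
        congr 1
        omega
      have heven : ((-1 : M) ^ U.card * (-1 : M) ^ U.card) = 1 := by
        rw [← pow_add]
        exact Even.neg_one_pow ⟨U.card, rfl⟩
      calc (-1 : M) ^ (T.card - (S'.card + U.card)) * g S'
          = (-1 : M) ^ (T.card - (S'.card + U.card)) * (((-1 : M) ^ U.card
              * (-1 : M) ^ U.card) * g S') := by rw [heven, one_mul]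
        _ = ((-1 : M) ^ (T.card - (S'.card + U.card)) * (-1 : M) ^ U.card)
              * ((-1 : M) ^ U.card * g S') := by ring
        _ = (-1 : M) ^ (T.card - S'.card) * ((-1 : M) ^ U.card * g S') := by rw [key]
    rw [Finset.sum_congr rfl hsign, ← Finset.mul_sum, ← Finset.sum_mul,
      neg_one_pow_sum]
    ring
  rw [Finset.sum_congr rfl inner]
  rw [Finset.sum_eq_single T]
  · rw [Finset.sdiff_self, if_pos rfl, Nat.sub_self, pow_zero]
    ring
  · intro S' hS' hne
    rw [Finset.mem_powerset] at hS'
    rw [if_neg, mul_zero, zero_mul]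
    intro hcon
    exact hne (le_antisymm hS' (Finset.sdiff_eq_empty_iff_subset.1 hcon))
  · intro hT
    exact absurd (Finset.mem_powerset.2 (le_refl T)) hT

theorem Ys_congr' (G : Multigraph) {k : ℕ} (u : Fin k → G.V)
    {τ τ' : Fin k → Fin k → Prop} (h : ∀ i j, τ i j ↔ τ' i j) :
    Ys G u τ = Ys G u τ' := by
  have : τ = τ' := funext fun i => funext fun j => propext (h i j)
  rw [this]

theorem Zp_addEdges' (G : Multigraph) {k : ℕ} (u : Fin k → G.V)
    (S : Finset (Sym2 (Fin k))) :
    Zp (G.addEdges {p // p ∈ S} (fun p => Sym2.map u p.1))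
      = ∑ S' ∈ S.powerset, Vp ^ S'.card * Ys G u (fun i j => s(i, j) ∈ S') := by
  classical
  rw [Zp_addEdges]
  refine Finset.sum_bij' (fun Q _ => Q.map (Function.Embedding.subtype _))
    (fun S' _ => S'.subtype _) ?_ ?_ ?_ ?_ ?_
  · intro Q _
    rw [Finset.mem_powerset]
    intro p hp
    rw [Finset.mem_map] at hp
    obtain ⟨q, _, rfl⟩ := hp
    exact q.2
  · intro S' _
    exact Finset.mem_univ _
  · intro Q _
    ext q
    simp [Finset.mem_subtype, Finset.mem_map]
  · intro S' hS'
    rw [Finset.mem_powerset] at hS'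
    ext p
    simp only [Finset.mem_map, Finset.mem_subtype, Function.Embedding.coe_subtype]
    refine ⟨?_, ?_⟩
    · rintro ⟨q, hq, rfl⟩
      exact hq
    · intro hp
      exact ⟨⟨p, hS' hp⟩, hp, rfl⟩
  · intro Q _
    rw [Finset.card_map]
    congr 1
    apply Ys_congr'
    intro i j
    simp only [Finset.mem_map, Function.Embedding.coe_subtype]

theorem connected_addEdges (G : Multigraph) (hG : G.Connected)
    (n : Type) [Fintype n] [DecidableEq n] (f : n → Sym2 G.V) :
    (G.addEdges n f).Connected := by
  haveI hne : Nonempty G.V := hG.nonempty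
  haveI hne' : Nonempty (G.addEdges n f).V := hne
  have hpre : ((G.addEdges n f).spanning Finset.univ).Preconnected := by
    intro a b
    have hre := hG.preconnected a b
    rw [reachable_iff_eqvGen_eRel G Finset.univ a b] at hre
    rw [reachable_iff_eqvGen_eRel (G.addEdges n f) Finset.univ a b]
    refine eqvGen_of_gen ?_ hre
    rintro x y ⟨e, _, hab⟩
    exact EqvGen.rel _ _ ⟨Sum.inl e, Finset.mem_univ _, hab⟩
  exact SimpleGraph.Connected.mk hpre

theorem comps_univ_addEdges (G : Multigraph) (hG : G.Connected)
    (n : Type) [Fintype n] [DecidableEq n] (f : n → Sym2 G.V) :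
    (G.addEdges n f).comps Finset.univ = 1 :=
  connected_comps_univ _ (connected_addEdges G hG n f)

noncomputable def φdeg : MvPolynomial (Fin 2) ℤ →+* Polynomial ℤ :=
  eval₂Hom Polynomial.C (fun i => if i = 0 then Polynomial.X + 1 else 2)

theorem φdeg_tutte (G : Multigraph) (hG : G.Connected) :
    φdeg G.tutte = ∑ A : Finset G.E, (Polynomial.X : Polynomial ℤ) ^ (G.comps A - 1) := by
  have hne : Nonempty G.V := hG.nonempty
  rw [Multigraph.tutte, map_sum]
  apply Finset.sum_congr rfl
  intro A _
  rw [map_mul, map_pow, map_pow, map_sub, map_sub, map_one]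
  have h0 : φdeg (X 0) = Polynomial.X + 1 := by
    rw [φdeg, eval₂Hom_X']
    simp
  have h1 : φdeg (X 1) = 2 := by
    rw [φdeg, eval₂Hom_X']
    norm_num
  rw [h0, h1]
  have hrk : G.rk Finset.univ - G.rk A = G.comps A - 1 := by
    have h2 := comps_le_card G A
    have h3 := comps_pos G A
    have h4 := connected_comps_univ G hG
    rw [Multigraph.rk, Multigraph.rk, h4]
    omega
  rw [hrk]
  norm_num

theorem natDegree_comps_sum (G : Multigraph) [Nonempty G.V] :
    (∑ A : Finset G.E, (Polynomial.X : Polynomial ℤ) ^ (G.comps A - 1)).natDegree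
      = Fintype.card G.V - 1 := by
  classical
  apply le_antisymm
  · apply Polynomial.natDegree_sum_le_of_forall_le
    intro A _
    rw [Polynomial.natDegree_X_pow]
    have := comps_le_card G A
    omega
  · apply Polynomial.le_natDegree_of_ne_zero
    rw [Polynomial.finset_sum_coeff]
    have hterm : ∀ A : Finset G.E,
        ((Polynomial.X : Polynomial ℤ) ^ (G.comps A - 1)).coeff (Fintype.card G.V - 1)
          = if Fintype.card G.V - 1 = G.comps A - 1 then 1 else 0 := by
      intro A
      rw [Polynomial.coeff_X_pow]
    have hnonneg : ∀ A ∈ (Finset.univ : Finset (Finset G.E)),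
        (0 : ℤ) ≤ ((Polynomial.X : Polynomial ℤ) ^ (G.comps A - 1)).coeff
          (Fintype.card G.V - 1) := by
      intro A _
      rw [hterm]
      split <;> norm_num
    have hbot : ((Polynomial.X : Polynomial ℤ) ^ (G.comps (∅ : Finset G.E) - 1)).coeff
        (Fintype.card G.V - 1) = 1 := by
      rw [hterm, if_pos]
      rw [comps_empty]
    have hge := Finset.single_le_sum hnonneg (Finset.mem_univ (∅ : Finset G.E))
    rw [hbot] at hge
    intro hcon
    rw [hcon] at hge
    norm_num at hge

theorem card_V_eq_of_tutte_eq (G H : Multigraph) (hG : G.Connected) (hH : H.Connected)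
    (h : G.tutte = H.tutte) : Fintype.card G.V = Fintype.card H.V := by
  have hneG : Nonempty G.V := hG.nonempty
  have hneH : Nonempty H.V := hH.nonempty
  have h1 := φdeg_tutte G hG
  have h2 := φdeg_tutte H hH
  rw [h] at h1
  have h3 : (∑ A : Finset G.E, (Polynomial.X : Polynomial ℤ) ^ (G.comps A - 1))
      = ∑ A : Finset H.E, (Polynomial.X : Polynomial ℤ) ^ (H.comps A - 1) := by
    rw [← h1, ← h2]
  have h4 := congrArg Polynomial.natDegree h3
  rw [natDegree_comps_sum, natDegree_comps_sum] at h4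
  have h5 : 0 < Fintype.card G.V := Fintype.card_pos
  have h6 : 0 < Fintype.card H.V := Fintype.card_pos
  omega

end TutteAux
namespace TutteAux
open Relation MvPolynomial

theorem glue_univ_eq_finsetSum (G W : Multigraph) {k : ℕ} (u : Fin k → G.V)
    (w : Fin k → W.V) :
    (G.glue W u w).comps Finset.univ
      = (G.glue W u w).comps (finsetSum Finset.univ Finset.univ) := by
  congr 1
  ext e
  rcases e with e | e
  · refine iff_of_true (Finset.mem_univ _) ?_
    exact (mem_finsetSum_inl).2 (Finset.mem_univ _)
  · refine iff_of_true (Finset.mem_univ _) ?_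
    exact (mem_finsetSum_inr).2 (Finset.mem_univ _)

theorem comps_univ_glue_eq (G H W : Multigraph) {k : ℕ} (u : Fin k → G.V)
    (v : Fin k → H.V) (w : Fin k → W.V) (hG : G.Connected) (hH : H.Connected) :
    (G.glue W u w).comps Finset.univ = (H.glue W v w).comps Finset.univ := by
  have kG := comps_glue G W u w Finset.univ Finset.univ
  have kH := comps_glue H W v w Finset.univ Finset.univ
  rw [← glue_univ_eq_finsetSum G W u w] at kG
  rw [← glue_univ_eq_finsetSum H W v w] at kH
  have hG1 : nc (eRel G Finset.univ) = 1 := by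
    rw [← comps_eq_nc]
    exact connected_comps_univ G hG
  have hH1 : nc (eRel H Finset.univ) = 1 := by
    rw [← comps_eq_nc]
    exact connected_comps_univ H hH
  have hGt : nc (fun i j : Fin k => EqvGen (eRel G Finset.univ) (u i) (u j))
      = nc (fun _ _ : Fin k => True) :=
    nc_congr (fun i j => iff_of_true (prel_univ_top G hG u i j) trivial)
  have hHt : nc (fun i j : Fin k => EqvGen (eRel H Finset.univ) (v i) (v j))
      = nc (fun _ _ : Fin k => True) :=
    nc_congr (fun i j => iff_of_true (prel_univ_top H hH v i j) trivial)
  have hGp : nc (fun b b' : W.V => eRel W Finset.univ b b' ∨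
        ∃ i j, EqvGen (eRel G Finset.univ) (u i) (u j) ∧ b = w i ∧ b' = w j)
      = nc (fun b b' : W.V => eRel W Finset.univ b b' ∨
        ∃ i j : Fin k, b = w i ∧ b' = w j) := by
    apply nc_congr
    intro b b'
    constructor
    · rintro (h' | ⟨i, j, _, h1, h2⟩)
      · exact Or.inl h'
      · exact Or.inr ⟨i, j, h1, h2⟩
    · rintro (h' | ⟨i, j, h1, h2⟩)
      · exact Or.inl h'
      · exact Or.inr ⟨i, j, prel_univ_top G hG u i j, h1, h2⟩
  have hHp : nc (fun b b' : W.V => eRel W Finset.univ b b' ∨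
        ∃ i j, EqvGen (eRel H Finset.univ) (v i) (v j) ∧ b = w i ∧ b' = w j)
      = nc (fun b b' : W.V => eRel W Finset.univ b b' ∨
        ∃ i j : Fin k, b = w i ∧ b' = w j) := by
    apply nc_congr
    intro b b'
    constructor
    · rintro (h' | ⟨i, j, _, h1, h2⟩)
      · exact Or.inl h'
      · exact Or.inr ⟨i, j, h1, h2⟩
    · rintro (h' | ⟨i, j, h1, h2⟩)
      · exact Or.inl h'
      · exact Or.inr ⟨i, j, prel_univ_top H hH v i j, h1, h2⟩
  omega

end TutteAux

open TutteAux

/-- if `G_S` and `H_S` are T-equivalent for every set `S` of added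
edges on the distinguished vertices, then gluing `G` and `H` to an arbitrary
graph `W` along the distinguished vertices yields T-equivalent graphs. -/
theorem stmt_6 (G H W : Multigraph) {k : ℕ}
    (u : Fin k → G.V) (v : Fin k → H.V) (w : Fin k → W.V)
    (hu : Function.Injective u) (hv : Function.Injective v) (hw : Function.Injective w)
    (hG : G.Connected) (hH : H.Connected)
    (h : ∀ S : Finset (Sym2 (Fin k)), (∀ p ∈ S, ¬ p.IsDiag) →
      (G.addEdges {p // p ∈ S} (fun p => Sym2.map u p.1)).tutte =
        (H.addEdges {p // p ∈ S} (fun p => Sym2.map v p.1)).tutte) :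
    (G.glue W u w).tutte = (H.glue W v w).tutte := by
  classical
  have h0 := h ∅ (fun p hp => absurd hp (Finset.notMem_empty p))
  have hVGH : Fintype.card G.V = Fintype.card H.V :=
    card_V_eq_of_tutte_eq
      (G.addEdges {p // p ∈ (∅ : Finset (Sym2 (Fin k)))} (fun p => Sym2.map u p.1))
      (H.addEdges {p // p ∈ (∅ : Finset (Sym2 (Fin k)))} (fun p => Sym2.map v p.1))
      (connected_addEdges G hG _ _) (connected_addEdges H hH _ _) h0
  have hZp : ∀ S : Finset (Sym2 (Fin k)), (∀ p ∈ S, ¬ p.IsDiag) →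
      Zp (G.addEdges {p // p ∈ S} (fun p => Sym2.map u p.1))
        = Zp (H.addEdges {p // p ∈ S} (fun p => Sym2.map v p.1)) := by
    intro S hS
    have cG := conv (G.addEdges {p // p ∈ S} (fun p => Sym2.map u p.1))
    have cH := conv (H.addEdges {p // p ∈ S} (fun p => Sym2.map v p.1))
    rw [comps_univ_addEdges G hG _ _] at cG
    rw [comps_univ_addEdges H hH _ _] at cH
    have hcardG : Fintype.card (G.addEdges {p // p ∈ S} (fun p => Sym2.map u p.1)).V
        = Fintype.card G.V := rfl
    have hcardH : Fintype.card (H.addEdges {p // p ∈ S} (fun p => Sym2.map v p.1)).V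
        = Fintype.card H.V := rfl
    rw [hcardG, hVGH] at cG
    rw [hcardH] at cH
    rw [← cG, ← cH, h S hS]
  have hYs : ∀ T : Finset (Sym2 (Fin k)), (∀ p ∈ T, ¬ p.IsDiag) →
      Ys G u (fun i j => s(i, j) ∈ T) = Ys H v (fun i j => s(i, j) ∈ T) := by
    intro T hT
    have hiG := incl_excl T
      (fun S' => Vp ^ S'.card * Ys G u (fun i j => s(i, j) ∈ S'))
    have hiH := incl_excl T
      (fun S' => Vp ^ S'.card * Ys H v (fun i j => s(i, j) ∈ S'))
    have hsum : ∀ S ∈ T.powerset,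
        (-1 : MvPolynomial (Fin 2) ℤ) ^ (T.card - S.card)
            * ∑ S' ∈ S.powerset, (Vp ^ S'.card * Ys G u (fun i j => s(i, j) ∈ S'))
          = (-1 : MvPolynomial (Fin 2) ℤ) ^ (T.card - S.card)
            * ∑ S' ∈ S.powerset, (Vp ^ S'.card * Ys H v (fun i j => s(i, j) ∈ S')) := by
      intro S hSmem
      rw [Finset.mem_powerset] at hSmem
      rw [← Zp_addEdges', ← Zp_addEdges', hZp S (fun p hp => hT p (hSmem hp))]
    have hcan : Vp ^ T.card * Ys G u (fun i j => s(i, j) ∈ T)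
        = Vp ^ T.card * Ys H v (fun i j => s(i, j) ∈ T) := by
      rw [← hiG, ← hiH]
      exact Finset.sum_congr rfl hsum
    exact mul_left_cancel₀ (pow_ne_zero _ Vp_ne_zero) hcan
  have hglue : Zp (G.glue W u w) = Zp (H.glue W v w) := by
    rw [Zp_glue, Zp_glue]
    apply Finset.sum_congr rfl
    intro B _
    congr 1
    have hsymm : ∀ i j, prel W w B i j = prel W w B j i :=
      fun i j => propext ⟨fun h' => h'.symm _ _, fun h' => h'.symm _ _⟩
    set TB : Finset (Sym2 (Fin k)) := Finset.univ.filter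
      (fun p => ¬ p.IsDiag ∧ Sym2.lift ⟨fun i j => prel W w B i j, hsymm⟩ p) with hTB
    have hmem : ∀ i j, (s(i, j) ∈ TB) ↔ (i ≠ j ∧ prel W w B i j) := by
      intro i j
      rw [hTB, Finset.mem_filter]
      simp [Sym2.mk_isDiag_iff, Sym2.lift_mk]
    have hGB : Ys G u (prel W w B) = Ys G u (fun i j => s(i, j) ∈ TB) := by
      refine Ys_congr G u ?_ ?_
      · intro i j hij
        by_cases hij' : i = j
        · exact Or.inl hij'
        · exact Or.inr ((hmem i j).2 ⟨hij', hij⟩)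
      · intro i j hij
        exact ((hmem i j).1 hij).2
    have hHB : Ys H v (prel W w B) = Ys H v (fun i j => s(i, j) ∈ TB) := by
      refine Ys_congr H v ?_ ?_
      · intro i j hij
        by_cases hij' : i = j
        · exact Or.inl hij'
        · exact Or.inr ((hmem i j).2 ⟨hij', hij⟩)
      · intro i j hij
        exact ((hmem i j).1 hij).2
    rw [hGB, hHB]
    refine hYs TB ?_
    intro p hp
    rw [hTB] at hp
    exact ((Finset.mem_filter.1 hp).2).1
  have c1 := conv (G.glue W u w)
  have c2 := conv (H.glue W v w)
  have hcomps := comps_univ_glue_eq G H W u v w hG hH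
  have hcardV : Fintype.card (G.glue W u w).V = Fintype.card (H.glue W v w).V := by
    have g1 := card_glue_V G W u w hw
    have g2 := card_glue_V H W v w hw
    rw [Nat.card_eq_fintype_card] at g1 g2
    omega
  rw [hcomps, hcardV] at c1
  have hPne : ((X 0 - 1 : MvPolynomial (Fin 2) ℤ) ^ ((H.glue W v w).comps Finset.univ)
      * (X 1 - 1) ^ (Fintype.card (H.glue W v w).V)) ≠ 0 :=
    mul_ne_zero (pow_ne_zero _ X0_sub_one_ne_zero) (pow_ne_zero _ X1_sub_one_ne_zero)
  apply mul_left_cancel₀ hPne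
  rw [show ((X 0 - 1 : MvPolynomial (Fin 2) ℤ) ^ ((H.glue W v w).comps Finset.univ)
      * (X 1 - 1) ^ (Fintype.card (H.glue W v w).V)) * (G.glue W u w).tutte
    = Zp (G.glue W u w) from c1]
  rw [show ((X 0 - 1 : MvPolynomial (Fin 2) ℤ) ^ ((H.glue W v w).comps Finset.univ)
      * (X 1 - 1) ^ (Fintype.card (H.glue W v w).V)) * (H.glue W v w).tutte
    = Zp (H.glue W v w) from c2]
  exact hglue
end

section
/- With G, H, u_1,…,u_k, v_1,…,v_k as above, suppose T_{G_S} = T_{H_S} for every S ⊆ {{i,j}: 1≤i<j≤k}. Then G and H have the same number of loops, and for each pair 1 ≤ i < j ≤ k, the number of edges of G joining u_i and u_j equals the number of edges of H joining v_i and v_j. -/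
open scoped BigOperators
open MvPolynomial

attribute [local instance] Classical.propDecidable

namespace Multigraph

variable (G : Multigraph)

lemma spanning_adj (A : Finset G.E) (x y : G.V) :
    (G.spanning A).Adj x y ↔ x ≠ y ∧ ∃ e ∈ A, G.ends e = s(x, y) := by
  unfold spanning
  rw [SimpleGraph.fromRel_adj]
  constructor
  · rintro ⟨hxy, h | h⟩
    · exact ⟨hxy, h⟩
    · obtain ⟨e, he, hee⟩ := h
      exact ⟨hxy, e, he, by rw [hee, Sym2.eq_swap]⟩
  · rintro ⟨hxy, h⟩; exact ⟨hxy, Or.inl h⟩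

variable {G}

lemma comps_le_card (A : Finset G.E) : G.comps A ≤ Fintype.card G.V := by
  have := Nat.card_le_card_of_surjective (G.spanning A).connectedComponentMk
    (fun c => c.exists_rep)
  simpa [Multigraph.comps, Nat.card_eq_fintype_card] using this

lemma comps_anti {A B : Finset G.E} (hAB : A ⊆ B) : G.comps B ≤ G.comps A := by
  have hle : G.spanning A ≤ G.spanning B := by
    intro x y hxy
    rw [spanning_adj] at hxy ⊢
    obtain ⟨hne, e, he, hee⟩ := hxy
    exact ⟨hne, e, hAB he, hee⟩
  have hsurj : Function.Surjective
      (SimpleGraph.ConnectedComponent.map (SimpleGraph.Hom.ofLE hle)) := by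
    intro c
    obtain ⟨w, rfl⟩ := c.exists_rep
    exact ⟨(G.spanning A).connectedComponentMk w, rfl⟩
  exact Nat.card_le_card_of_surjective _ hsurj

lemma comps_eq_card {A : Finset G.E} (hA : ∀ e ∈ A, (G.ends e).IsDiag) :
    G.comps A = Fintype.card G.V := by
  have hbot : G.spanning A = ⊥ := by
    ext x y
    rw [spanning_adj]
    simp only [SimpleGraph.bot_adj, iff_false, not_and]
    rintro hxy ⟨e, he, hee⟩
    exact hxy (by simpa [hee, Sym2.mk_isDiag_iff] using hA e he)
  have hbij : Function.Bijective (G.spanning A).connectedComponentMk := by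
    refine ⟨fun x y hxy => ?_, fun c => c.exists_rep⟩
    have h2 := SimpleGraph.ConnectedComponent.eq.mp hxy
    rw [hbot] at h2
    exact SimpleGraph.reachable_bot.mp h2
  have := Nat.card_eq_of_bijective _ hbij
  simpa [Multigraph.comps, Nat.card_eq_fintype_card] using this.symm

/-- characterization of reachability when all non-loop edges join `a` and `b` -/
lemma reach_cases {A : Finset G.E} {a b : G.V}
    (hA : ∀ e ∈ A, (G.ends e).IsDiag ∨ G.ends e = s(a, b)) {x y : G.V}
    (h : (G.spanning A).Reachable x y) : x = y ∨ s(x, y) = s(a, b) := by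
  rw [SimpleGraph.reachable_iff_reflTransGen] at h
  induction h with
  | refl => exact Or.inl rfl
  | tail h1 h2 ih =>
    rename_i c d
    rw [spanning_adj] at h2
    obtain ⟨hcd, e, he, hee⟩ := h2
    have hcd' : s(c, d) = s(a, b) := by
      rcases hA e he with hd | hd
      · exact absurd (by simpa [hee, Sym2.mk_isDiag_iff] using hd) hcd
      · rw [← hee, hd]
    rcases ih with rfl | hxc
    · exact Or.inr hcd'
    · rw [Sym2.eq_iff] at hxc hcd'
      rcases hxc with ⟨hx, hc⟩ | ⟨hx, hc⟩ <;> rcases hcd' with ⟨hc2, hd⟩ | ⟨hc2, hd⟩ <;>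
        subst_vars <;> simp [Sym2.eq_swap]

lemma sym2_exists {α : Type} (p : Sym2 α) : ∃ a b, p = s(a, b) :=
  Sym2.inductionOn p fun a b => ⟨a, b, rfl⟩

lemma sym2_partner {α : Type} {p : Sym2 α} {x : α} (hx : x ∈ p) (hnd : ¬ p.IsDiag) :
    ∃ x', p = s(x, x') ∧ x' ≠ x := by
  obtain ⟨a, b, rfl⟩ := sym2_exists p
  rw [Sym2.mk_isDiag_iff] at hnd
  rcases Sym2.mem_iff.mp hx with rfl | rfl
  · exact ⟨b, rfl, fun hc => hnd hc.symm⟩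
  · exact ⟨a, Sym2.eq_swap, hnd⟩

lemma comps_pair {A : Finset G.E} {a b : G.V} (hab : a ≠ b) {e₀ : G.E}
    (he₀ : e₀ ∈ A) (hend : G.ends e₀ = s(a, b))
    (hA : ∀ e ∈ A, (G.ends e).IsDiag ∨ G.ends e = s(a, b)) :
    G.comps A = Fintype.card G.V - 1 := by
  have hadj : (G.spanning A).Adj a b := (spanning_adj G A a b).mpr ⟨hab, e₀, he₀, hend⟩
  have hbij : Function.Bijective
      (fun v : {v : G.V // v ≠ b} => (G.spanning A).connectedComponentMk v.1) := by
    constructor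
    · rintro ⟨x, hx⟩ ⟨y, hy⟩ hxy
      have h2 := SimpleGraph.ConnectedComponent.eq.mp hxy
      rcases reach_cases hA h2 with h3 | h3
      · exact Subtype.ext h3
      · rw [Sym2.eq_iff] at h3
        rcases h3 with ⟨rfl, h4⟩ | ⟨h4, rfl⟩
        · exact absurd h4 hy
        · exact absurd h4 hx
    · intro c
      obtain ⟨w, rfl⟩ := c.exists_rep
      by_cases hw : w = b
      · refine ⟨⟨a, hab⟩, ?_⟩
        subst hw
        exact SimpleGraph.ConnectedComponent.sound hadj.reachable
      · exact ⟨⟨w, hw⟩, rfl⟩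
  have h5 := Nat.card_eq_of_bijective _ hbij
  have h6 : Nat.card {v : G.V // v ≠ b} = Fintype.card G.V - 1 := by
    rw [Nat.card_eq_fintype_card]
    have := Fintype.card_subtype_compl (fun v : G.V => v = b)
    simpa [Fintype.card_subtype_eq] using this
  show Nat.card _ = _
  rw [← h5, h6]

lemma comps_add_one_le {A : Finset G.E} {e₀ : G.E} (he₀ : e₀ ∈ A)
    (hnd : ¬ (G.ends e₀).IsDiag) : G.comps A + 1 ≤ Fintype.card G.V := by
  obtain ⟨a, b, hab⟩ := sym2_exists (G.ends e₀)
  have hne : a ≠ b := by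
    rw [hab, Sym2.mk_isDiag_iff] at hnd; exact hnd
  have hadj : (G.spanning A).Adj a b := (spanning_adj G A a b).mpr ⟨hne, e₀, he₀, hab⟩
  have hsurj : Function.Surjective
      (fun v : {v : G.V // v ≠ b} => (G.spanning A).connectedComponentMk v.1) := by
    intro c
    obtain ⟨w, rfl⟩ := c.exists_rep
    by_cases hw : w = b
    · refine ⟨⟨a, hne⟩, ?_⟩
      subst hw
      exact SimpleGraph.ConnectedComponent.sound hadj.reachable
    · exact ⟨⟨w, hw⟩, rfl⟩
  have h5 := Nat.card_le_card_of_surjective _ hsurj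
  have h6 : Nat.card {v : G.V // v ≠ b} = Fintype.card G.V - 1 := by
    rw [Nat.card_eq_fintype_card]
    have := Fintype.card_subtype_compl (fun v : G.V => v = b)
    simpa [Fintype.card_subtype_eq] using this
  have h7 : 1 ≤ Fintype.card G.V := Fintype.card_pos_iff.mpr ⟨a⟩
  have h8 : G.comps A ≤ Fintype.card G.V - 1 := le_trans h5 (le_of_eq h6)
  omega

lemma comps_add_two_le {A : Finset G.E} {e₁ e₂ : G.E} (h1 : e₁ ∈ A) (h2 : e₂ ∈ A)
    (hnd1 : ¬ (G.ends e₁).IsDiag) (hnd2 : ¬ (G.ends e₂).IsDiag)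
    (hne : G.ends e₁ ≠ G.ends e₂) : G.comps A + 2 ≤ Fintype.card G.V := by
  -- find x ∈ ends e₁ with x ∉ ends e₂
  obtain ⟨a, b, hab⟩ := sym2_exists (G.ends e₁)
  have hab' : a ≠ b := by rw [hab, Sym2.mk_isDiag_iff] at hnd1; exact hnd1
  have hx : ∃ x, x ∈ G.ends e₁ ∧ x ∉ G.ends e₂ := by
    by_contra hc
    push_neg at hc
    have ha : a ∈ G.ends e₂ := hc a (by rw [hab]; exact Sym2.mem_mk_left a b)
    have hb : b ∈ G.ends e₂ := hc b (by rw [hab]; exact Sym2.mem_mk_right a b)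
    obtain ⟨c, d, hcd⟩ := sym2_exists (G.ends e₂)
    rw [hcd, Sym2.mem_iff] at ha hb
    apply hne
    rw [hab, hcd, Sym2.eq_iff]
    rcases ha with rfl | rfl <;> rcases hb with h | h <;> tauto
  obtain ⟨x, hx1, hx2⟩ := hx
  obtain ⟨x', hx'1, hx'2⟩ := sym2_partner hx1 hnd1
  obtain ⟨c, d, hcd⟩ := sym2_exists (G.ends e₂)
  have hcd' : c ≠ d := by rw [hcd, Sym2.mk_isDiag_iff] at hnd2; exact hnd2
  have hxc : x ≠ c := fun h => hx2 (by rw [hcd, h]; exact Sym2.mem_mk_left c d)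
  have hxd : x ≠ d := fun h => hx2 (by rw [hcd, h]; exact Sym2.mem_mk_right c d)
  have hadj1 : (G.spanning A).Adj x x' :=
    (spanning_adj G A x x').mpr ⟨fun h => hx'2 h.symm, e₁, h1, hx'1⟩
  have hadj2 : (G.spanning A).Adj c d := (spanning_adj G A c d).mpr ⟨hcd', e₂, h2, hcd⟩
  have hsurj : Function.Surjective
      (fun v : {v : G.V // v ≠ x ∧ v ≠ c} => (G.spanning A).connectedComponentMk v.1) := by
    intro cc
    obtain ⟨w, rfl⟩ := cc.exists_rep
    have hcase : ∀ w' : G.V, w' ≠ x → (G.spanning A).connectedComponentMk w =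
        (G.spanning A).connectedComponentMk w' → ∃ v : {v : G.V // v ≠ x ∧ v ≠ c},
        (G.spanning A).connectedComponentMk v.1 = (G.spanning A).connectedComponentMk w := by
      intro w' hw1 hw2
      by_cases hw3 : w' = c
      · refine ⟨⟨d, fun h => hxd h.symm, fun h => hcd' h.symm⟩, ?_⟩
        rw [hw2, hw3]
        exact SimpleGraph.ConnectedComponent.sound hadj2.symm.reachable
      · exact ⟨⟨w', hw1, hw3⟩, hw2.symm⟩
    by_cases hw : w = x
    · subst hw
      exact hcase x' (fun h => hx'2 h)
        (SimpleGraph.ConnectedComponent.sound hadj1.reachable)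
    · exact hcase w hw rfl
  have h5 := Nat.card_le_card_of_surjective _ hsurj
  have h6 : Nat.card {v : G.V // v ≠ x ∧ v ≠ c} = Fintype.card G.V - 2 := by
    rw [Nat.card_eq_fintype_card, Fintype.card_subtype]
    have hfe : Finset.filter (fun v : G.V => v ≠ x ∧ v ≠ c) Finset.univ =
        Finset.univ \ {x, c} := by
      ext v
      simp [Finset.mem_sdiff, not_or]
    rw [hfe, Finset.card_sdiff_of_subset (Finset.subset_univ _), Finset.card_univ]
    congr 1
    rw [Finset.card_insert_of_notMem (by simpa using hxc), Finset.card_singleton]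
  have h7 : 2 ≤ Fintype.card G.V := by
    have := Finset.card_le_card (Finset.subset_univ ({x, c} : Finset G.V))
    rwa [Finset.card_insert_of_notMem (by simpa using hxc), Finset.card_singleton,
      Finset.card_univ] at this
  have hc : G.comps A = Nat.card (G.spanning A).ConnectedComponent := rfl
  omega

lemma rk_mono {A B : Finset G.E} (hAB : A ⊆ B) : G.rk A ≤ G.rk B := by
  have := comps_anti hAB; unfold rk; omega

lemma rk_eq_zero_iff {A : Finset G.E} :
    G.rk A = 0 ↔ ∀ e ∈ A, (G.ends e).IsDiag := by
  constructor
  · intro h e he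
    by_contra hnd
    have h1 := comps_add_one_le he hnd
    unfold rk at h; omega
  · intro h
    unfold rk; rw [comps_eq_card h]; omega

lemma rk_empty : G.rk ∅ = 0 := rk_eq_zero_iff.mpr (by simp)

lemma rk_eq_one_iff {A : Finset G.E} {a b : G.V} (hab : a ≠ b) {e₀ : G.E}
    (he₀ : e₀ ∈ A) (hend : G.ends e₀ = s(a, b)) :
    G.rk A = 1 ↔ ∀ e ∈ A, (G.ends e).IsDiag ∨ G.ends e = s(a, b) := by
  constructor
  · intro h e he
    by_contra hc
    push_neg at hc
    obtain ⟨hnd, hq⟩ := hc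
    have hnd0 : ¬ (G.ends e₀).IsDiag := by rw [hend, Sym2.mk_isDiag_iff]; exact hab
    have h2 := comps_add_two_le he₀ he hnd0 hnd
      (by rw [hend]; exact fun hh => hq hh.symm)
    unfold rk at h; omega
  · intro hA
    have h2 : 2 ≤ Fintype.card G.V :=
      Fintype.one_lt_card_iff_nontrivial.mpr ⟨⟨a, b, hab⟩⟩
    unfold rk; rw [comps_pair hab he₀ hend hA]; omega

section AddEdges

variable {n : Type} [Fintype n] [DecidableEq n] {f : n → Sym2 G.V}

lemma card_V_addEdges : Fintype.card (G.addEdges n f).V = Fintype.card G.V :=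
  Fintype.card_congr (Equiv.refl G.V)

lemma spanning_addEdges_image (A : Finset G.E) :
    (G.addEdges n f).spanning (A.image Sum.inl) = G.spanning A := by
  ext x y
  rw [spanning_adj G A x y, spanning_adj]
  constructor
  · rintro ⟨hne, e, he, hee⟩
    obtain ⟨e₀, he₀, rfl⟩ := Finset.mem_image.mp he
    exact ⟨hne, e₀, he₀, hee⟩
  · rintro ⟨hne, e₀, he₀, hee⟩
    exact ⟨hne, Sum.inl e₀, Finset.mem_image_of_mem _ he₀, hee⟩

lemma rk_addEdges_image (A : Finset G.E) :
    (G.addEdges n f).rk (A.image Sum.inl) = G.rk A := by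
  unfold rk comps
  rw [spanning_addEdges_image, card_V_addEdges]
  rfl

end AddEdges


noncomputable def phiT (G : Multigraph) : MvPolynomial (Fin 2) ℤ :=
  MvPolynomial.aeval (fun i => X i + 1) G.tutte

noncomputable def psiT (G : Multigraph) : Polynomial ℤ :=
  MvPolynomial.aeval (fun i : Fin 2 => if i = 0 then Polynomial.X + 1 else 2) G.tutte

lemma phiT_eq (G : Multigraph) : G.phiT = ∑ A : Finset G.E,
    MvPolynomial.monomial (Finsupp.single 0 (G.rk Finset.univ - G.rk A) +
      Finsupp.single 1 (A.card - G.rk A)) 1 := by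
  unfold phiT tutte
  rw [map_sum]
  refine Finset.sum_congr rfl fun A _ => ?_
  simp only [map_mul, map_pow, map_sub, map_one, MvPolynomial.aeval_X,
    add_sub_cancel_right]
  rw [MvPolynomial.X_pow_eq_monomial, MvPolynomial.X_pow_eq_monomial,
    MvPolynomial.monomial_mul, one_mul]

lemma psiT_eq (G : Multigraph) : G.psiT = ∑ A : Finset G.E,
    Polynomial.X ^ (G.rk Finset.univ - G.rk A) := by
  unfold psiT tutte
  rw [map_sum]
  refine Finset.sum_congr rfl fun A _ => ?_
  simp only [map_mul, map_pow, map_sub, map_one, MvPolynomial.aeval_X]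
  norm_num

lemma single_pair_inj (a b c c' : ℕ) :
    (Finsupp.single (0 : Fin 2) a + Finsupp.single 1 b =
      Finsupp.single 0 c + Finsupp.single 1 c') ↔ a = c ∧ b = c' := by
  constructor
  · intro h
    have h0 := DFunLike.congr_fun h 0
    have h1 := DFunLike.congr_fun h 1
    simp [Finsupp.single_apply] at h0 h1
    exact ⟨h0, h1⟩
  · rintro ⟨rfl, rfl⟩; rfl

lemma coeff_phiT (G : Multigraph) (c c' : ℕ) :
    MvPolynomial.coeff (Finsupp.single 0 c + Finsupp.single 1 c') G.phiT =
      ((Finset.univ.filter fun A : Finset G.E =>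
        G.rk Finset.univ - G.rk A = c ∧ A.card - G.rk A = c').card : ℤ) := by
  rw [phiT_eq, MvPolynomial.coeff_sum, ← Finset.sum_boole]
  refine Finset.sum_congr rfl fun A _ => ?_
  rw [MvPolynomial.coeff_monomial]
  simp only [single_pair_inj]

lemma coeff_psiT (G : Multigraph) (c : ℕ) :
    (G.psiT).coeff c = ((Finset.univ.filter fun A : Finset G.E =>
      G.rk Finset.univ - G.rk A = c).card : ℤ) := by
  rw [psiT_eq, Polynomial.finset_sum_coeff, ← Finset.sum_boole]
  refine Finset.sum_congr rfl fun A _ => ?_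
  rw [Polynomial.coeff_X_pow]
  by_cases hc : G.rk Finset.univ - G.rk A = c
  · rw [if_pos hc.symm, if_pos hc]
  · rw [if_neg (fun hcc => hc hcc.symm), if_neg hc]

lemma coeff_phiT_top (G : Multigraph) :
    MvPolynomial.coeff (Finsupp.single 0 (G.rk Finset.univ) + Finsupp.single 1 0)
      G.phiT = 1 := by
  rw [coeff_phiT]
  have h : (Finset.univ.filter fun A : Finset G.E =>
      G.rk Finset.univ - G.rk A = G.rk Finset.univ ∧ A.card - G.rk A = 0) = {∅} := by
    ext A
    simp only [Finset.mem_filter, Finset.mem_univ, true_and, Finset.mem_singleton]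
    constructor
    · rintro ⟨h1, h2⟩
      have h3 := rk_mono (Finset.subset_univ A) (G := G)
      have h5 : A.card = 0 := by omega
      exact Finset.card_eq_zero.mp h5
    · rintro rfl
      simp [rk_empty]
  rw [h]
  norm_num

lemma coeff_phiT_eq_zero (G : Multigraph) {d : Fin 2 →₀ ℕ}
    (hd : G.rk Finset.univ < d 0) : MvPolynomial.coeff d G.phiT = 0 := by
  rw [phiT_eq, MvPolynomial.coeff_sum]
  refine Finset.sum_eq_zero fun A _ => ?_
  rw [MvPolynomial.coeff_monomial, if_neg]
  intro hcontra
  have h0 := DFunLike.congr_fun hcontra 0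
  simp [Finsupp.single_apply] at h0
  omega

lemma rk_univ_le_of_phiT {G H : Multigraph} (h : G.phiT = H.phiT) :
    G.rk Finset.univ ≤ H.rk Finset.univ := by
  by_contra hlt
  push_neg at hlt
  have h1 := coeff_phiT_top G
  rw [h] at h1
  rw [coeff_phiT_eq_zero H (by simp [Finsupp.single_apply]; omega)] at h1
  exact absurd h1 (by norm_num)

lemma rk_univ_eq_of_phiT {G H : Multigraph} (h : G.phiT = H.phiT) :
    G.rk Finset.univ = H.rk Finset.univ :=
  le_antisymm (rk_univ_le_of_phiT h) (rk_univ_le_of_phiT h.symm)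

lemma numLoops_eq_card (G : Multigraph) :
    G.numLoops = (Finset.univ.filter fun e : G.E => (G.ends e).IsDiag).card := by
  unfold numLoops
  rw [Nat.card_eq_fintype_card, Fintype.card_subtype]

lemma coeff_phiT_loops (G : Multigraph) :
    MvPolynomial.coeff (Finsupp.single 0 (G.rk Finset.univ) + Finsupp.single 1 1)
      G.phiT = (G.numLoops : ℤ) := by
  rw [coeff_phiT, numLoops_eq_card]
  congr 1
  have himg : (Finset.univ.filter fun A : Finset G.E =>
      G.rk Finset.univ - G.rk A = G.rk Finset.univ ∧ A.card - G.rk A = 1) =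
      (Finset.univ.filter fun e : G.E => (G.ends e).IsDiag).image
        (fun e => ({e} : Finset G.E)) := by
    ext A
    simp only [Finset.mem_filter, Finset.mem_univ, true_and, Finset.mem_image]
    constructor
    · rintro ⟨h1, h2⟩
      have h3 := rk_mono (Finset.subset_univ A) (G := G)
      have h4 : G.rk A = 0 := by omega
      have h5 : A.card = 1 := by omega
      obtain ⟨e, rfl⟩ := Finset.card_eq_one.mp h5
      refine ⟨e, ?_, rfl⟩
      have h6 := rk_eq_zero_iff.mp h4 e (Finset.mem_singleton_self e)
      exact h6
    · rintro ⟨e, he, rfl⟩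
      have h0 : G.rk {e} = 0 := rk_eq_zero_iff.mpr (by simpa using he)
      rw [h0]
      simp
  rw [himg, Finset.card_image_of_injective _ Finset.singleton_injective]

lemma numLoops_eq_of_phiT {G H : Multigraph} (h : G.phiT = H.phiT) :
    G.numLoops = H.numLoops := by
  have hr := rk_univ_eq_of_phiT h
  have h1 := coeff_phiT_loops G
  rw [h, hr, coeff_phiT_loops H] at h1
  exact_mod_cast h1.symm

lemma M1_eq_of_tutte {G H : Multigraph} (ht : G.tutte = H.tutte) :
    (Finset.univ.filter fun A : Finset G.E => G.rk A = 1).card =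
      (Finset.univ.filter fun A : Finset H.E => H.rk A = 1).card := by
  have hphi : G.phiT = H.phiT := by unfold phiT; rw [ht]
  have hr := rk_univ_eq_of_phiT hphi
  by_cases h1 : 1 ≤ G.rk Finset.univ
  · have hpsi : G.psiT = H.psiT := by unfold psiT; rw [ht]
    have hcg : (Finset.univ.filter fun A : Finset G.E =>
        G.rk Finset.univ - G.rk A = G.rk Finset.univ - 1) =
        Finset.univ.filter fun A : Finset G.E => G.rk A = 1 := by
      ext A
      simp only [Finset.mem_filter, Finset.mem_univ, true_and]
      have h3 := rk_mono (Finset.subset_univ A) (G := G)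
      omega
    have hch : (Finset.univ.filter fun A : Finset H.E =>
        H.rk Finset.univ - H.rk A = H.rk Finset.univ - 1) =
        Finset.univ.filter fun A : Finset H.E => H.rk A = 1 := by
      ext A
      simp only [Finset.mem_filter, Finset.mem_univ, true_and]
      have h3 := rk_mono (Finset.subset_univ A) (G := H)
      omega
    have key : (G.psiT).coeff (G.rk Finset.univ - 1) =
        (H.psiT).coeff (H.rk Finset.univ - 1) := by rw [hpsi, hr]
    rw [coeff_psiT, coeff_psiT, hcg, hch] at key
    exact_mod_cast key
  · push_neg at h1
    have hg : (Finset.univ.filter fun A : Finset G.E => G.rk A = 1) = ∅ := by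
      refine Finset.filter_eq_empty_iff.mpr fun {A} _ => ?_
      have h3 := rk_mono (Finset.subset_univ A) (G := G)
      omega
    have hh : (Finset.univ.filter fun A : Finset H.E => H.rk A = 1) = ∅ := by
      refine Finset.filter_eq_empty_iff.mpr fun {A} _ => ?_
      have h3 := rk_mono (Finset.subset_univ A) (G := H)
      omega
    rw [hg, hh]
    simp

end Multigraph

namespace Multigraph

variable {G : Multigraph}

section Count

variable {n : Type} [Fintype n] [DecidableEq n] {f : n → Sym2 G.V}

lemma M1_addEdges_left :
    (Finset.univ.filter fun A : Finset (G.addEdges n f).E =>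
      (G.addEdges n f).rk A = 1 ∧ ∀ x ∈ A, x.isLeft = true).card =
    (Finset.univ.filter fun A : Finset G.E => G.rk A = 1).card := by
  rw [← Finset.card_image_of_injective
    (Finset.univ.filter fun A : Finset G.E => G.rk A = 1)
    (Finset.image_injective (f := (Sum.inl : G.E → (G.addEdges n f).E)) Sum.inl_injective)]
  congr 1
  ext B
  erw [Finset.mem_image, Finset.mem_filter]
  simp only [Finset.mem_image, Finset.mem_filter, Finset.mem_univ, true_and]
  constructor
  · rintro ⟨hrk, hleft⟩
    have himg : B.toLeft.image Sum.inl = B := by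
      ext x
      cases x with
      | inl a => simp [Finset.mem_toLeft]; exact Finset.mem_toLeft
      | inr b =>
        simp only [Finset.mem_image, Finset.mem_toLeft]
        constructor
        · rintro ⟨a, _, hc⟩; exact absurd hc Sum.inl_ne_inr
        · intro hb; have := hleft _ hb; simp at this
    refine ⟨B.toLeft, ?_, himg⟩
    erw [← rk_addEdges_image (G := G) (f := f) B.toLeft, himg]
    exact hrk
  · rintro ⟨A, hA, rfl⟩
    refine ⟨?_, ?_⟩
    · erw [rk_addEdges_image]; exact hA
    · intro x hx
      obtain ⟨a, _, rfl⟩ := Finset.mem_image.mp hx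
      rfl

lemma M1_addEdges_empty (hn : IsEmpty n) :
    (Finset.univ.filter fun A : Finset (G.addEdges n f).E =>
      (G.addEdges n f).rk A = 1).card =
    (Finset.univ.filter fun A : Finset G.E => G.rk A = 1).card := by
  rw [← M1_addEdges_left (G := G) (n := n) (f := f)]
  congr 1
  ext A
  simp only [Finset.mem_filter, Finset.mem_univ, true_and]
  constructor
  · intro h1
    refine ⟨h1, fun x _ => ?_⟩
    cases x with
    | inl a => rfl
    | inr t => exact hn.elim t
  · exact fun h1 => h1.1

lemma numLoops_addEdges_empty (hn : IsEmpty n) :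
    (G.addEdges n f).numLoops = G.numLoops := by
  unfold numLoops
  refine (Nat.card_eq_of_bijective
    (fun x : {e : G.E // (G.ends e).IsDiag} =>
      (⟨Sum.inl x.1, x.2⟩ : {e : (G.addEdges n f).E // ((G.addEdges n f).ends e).IsDiag}))
    ⟨?_, ?_⟩).symm
  · rintro ⟨x, hx⟩ ⟨y, hy⟩ hxy
    apply Subtype.ext
    exact Sum.inl_injective (congrArg Subtype.val hxy)
  · intro y
    have hex : ∃ e : G.E, y.1 = Sum.inl e := by
      rcases hy : y.1 with e | t
      · exact ⟨e, rfl⟩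
      · exact hn.elim t
    obtain ⟨e, he⟩ := hex
    refine ⟨⟨e, ?_⟩, ?_⟩
    · have h2 := y.2
      rw [he] at h2
      exact h2
    · exact Subtype.ext he.symm

lemma card_rk_one_mem {t₀ : n} (hall : ∀ t : n, t = t₀) {a b : G.V} (hab : a ≠ b)
    (hf : f t₀ = s(a, b)) :
    (Finset.univ.filter fun A : Finset (G.addEdges n f).E =>
      (G.addEdges n f).rk A = 1 ∧ Sum.inr t₀ ∈ A).card =
    2 ^ ((Finset.univ.filter fun e : G.E =>
      (G.ends e).IsDiag ∨ G.ends e = s(a, b)).card) := by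
  set K := G.addEdges n f with hK
  have hends : K.ends (Sum.inr t₀) = s(a, b) := hf
  set F : Finset K.E := Finset.univ.filter
    (fun e : K.E => (K.ends e).IsDiag ∨ K.ends e = s(a, b)) with hF
  have hstar : (Sum.inr t₀ : K.E) ∈ F := by
    rw [hF]
    convert (Finset.mem_filter (p := fun e : K.E => (K.ends e).IsDiag ∨ K.ends e = s(a, b))).mpr
      ⟨Finset.mem_univ (Sum.inr t₀ : K.E), Or.inr hends⟩
    exact Iff.of_eq (congrArg (fun s : Finset K.E => (Sum.inr t₀ : K.E) ∈ s)
      (Finset.filter_congr_decidable _ _ _))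
  -- step 1 : rewrite the filter
  have hiff : ∀ A : Finset K.E, (K.rk A = 1 ∧ Sum.inr t₀ ∈ A) ↔
      (Sum.inr t₀ ∈ A ∧ A ⊆ F) := by
    intro A
    constructor
    · rintro ⟨h1, h2⟩
      refine ⟨h2, fun e he => ?_⟩
      rw [hF, Finset.mem_filter]
      exact ⟨Finset.mem_univ _, (rk_eq_one_iff (G := K) hab h2 hends).mp h1 e he⟩
    · rintro ⟨h2, hsub⟩
      refine ⟨(rk_eq_one_iff (G := K) hab h2 hends).mpr fun e he => ?_, h2⟩
      have := hsub he
      rw [hF, Finset.mem_filter] at this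
      exact this.2
  have hfe : (Finset.univ.filter fun A : Finset K.E => K.rk A = 1 ∧ Sum.inr t₀ ∈ A) =
      Finset.univ.filter fun A : Finset K.E => Sum.inr t₀ ∈ A ∧ A ⊆ F := by
    ext A
    simp only [Finset.mem_filter, Finset.mem_univ, true_and]
    exact hiff A
  rw [hfe]
  -- step 2 : bijection with the powerset of F.erase e*
  have hbij : (Finset.univ.filter fun A : Finset K.E =>
      Sum.inr t₀ ∈ A ∧ A ⊆ F).card = (F.erase (Sum.inr t₀)).powerset.card := by
    refine Finset.card_bij' (fun A _ => A.erase (Sum.inr t₀))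
      (fun B _ => insert (Sum.inr t₀) B) ?_ ?_ ?_ ?_
    · intro A hA
      rw [Finset.mem_filter] at hA
      rw [Finset.mem_powerset]
      exact Finset.erase_subset_erase _ hA.2.2
    · intro B hB
      rw [Finset.mem_powerset] at hB
      rw [Finset.mem_filter]
      refine ⟨Finset.mem_univ _, Finset.mem_insert_self _ _, ?_⟩
      refine Finset.insert_subset_iff.mpr ?_
      exact ⟨hstar, hB.trans (Finset.erase_subset _ _)⟩
    · intro A hA
      rw [Finset.mem_filter] at hA
      exact Finset.insert_erase hA.2.1
    · intro B hB
      rw [Finset.mem_powerset] at hB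
      exact Finset.erase_insert fun hc => (Finset.notMem_erase _ _) (hB hc)
  have hce : (F.erase (Sum.inr t₀)).card = F.card - 1 := Finset.card_erase_of_mem hstar
  rw [hbij, Finset.card_powerset, hce]
  congr 1
  -- step 3 : compute F.card
  have hFeq : F = ((Finset.univ.filter fun e : G.E =>
      (G.ends e).IsDiag ∨ G.ends e = s(a, b)).map
        ⟨Sum.inl, Sum.inl_injective⟩) ∪ {Sum.inr t₀} := by
    rw [hF]
    ext x
    cases x with
    | inl e =>
      erw [Finset.mem_filter, Finset.mem_union, Finset.mem_map, Finset.mem_singleton]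
      constructor
      · rintro ⟨-, hp⟩
        exact Or.inl ⟨e, Finset.mem_filter.mpr ⟨Finset.mem_univ _, hp⟩, rfl⟩
      · rintro (⟨e', he', hee⟩ | hc)
        · have he2 := (Finset.mem_filter.mp he').2
          refine ⟨Finset.mem_univ _, ?_⟩
          obtain rfl : e' = e := Sum.inl_injective hee
          exact he2
        · exact absurd hc Sum.inl_ne_inr
    | inr t =>
      erw [Finset.mem_filter, Finset.mem_union, Finset.mem_singleton]
      constructor
      · intro _
        exact Or.inr (by rw [hall t])
      · intro _
        exact ⟨Finset.mem_univ _, by rw [hall t]; exact Or.inr hends⟩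
  have hdisj2 : Disjoint ((Finset.univ.filter fun e : G.E =>
      (G.ends e).IsDiag ∨ G.ends e = s(a, b)).map
        ⟨Sum.inl, Sum.inl_injective⟩) ({Sum.inr t₀} : Finset (G.addEdges n f).E) := by
    erw [Finset.disjoint_left]
    intro x hx hy
    rw [Finset.mem_map] at hx
    obtain ⟨e', _, rfl⟩ := hx
    erw [Finset.mem_singleton] at hy
    exact absurd hy Sum.inl_ne_inr
  have hFcard : F.card = (Finset.univ.filter fun e : G.E =>
      (G.ends e).IsDiag ∨ G.ends e = s(a, b)).card + 1 := by
    erw [hFeq, Finset.card_union_of_disjoint hdisj2, Finset.card_map,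
      Finset.card_singleton]
  rw [hFcard]
  omega

lemma M1_addEdges_split {t₀ : n} (hall : ∀ t : n, t = t₀) {a b : G.V} (hab : a ≠ b)
    (hf : f t₀ = s(a, b)) :
    (Finset.univ.filter fun A : Finset (G.addEdges n f).E =>
      (G.addEdges n f).rk A = 1).card =
    (Finset.univ.filter fun A : Finset G.E => G.rk A = 1).card +
    2 ^ ((Finset.univ.filter fun e : G.E =>
      (G.ends e).IsDiag ∨ G.ends e = s(a, b)).card) := by
  have hsplit := Finset.card_filter_add_card_filter_not
    (s := Finset.univ.filter fun A : Finset (G.addEdges n f).E =>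
      (G.addEdges n f).rk A = 1) (fun A => Sum.inr t₀ ∈ A)
  rw [Finset.filter_filter, Finset.filter_filter] at hsplit
  have hneg : (Finset.univ.filter fun A : Finset (G.addEdges n f).E =>
      (G.addEdges n f).rk A = 1 ∧ ¬ Sum.inr t₀ ∈ A) =
      Finset.univ.filter fun A : Finset (G.addEdges n f).E =>
      (G.addEdges n f).rk A = 1 ∧ ∀ x ∈ A, x.isLeft = true := by
    ext A
    simp only [Finset.mem_filter, Finset.mem_univ, true_and, and_congr_right_iff]
    intro _
    constructor
    · intro hn2 x hx
      cases x with
      | inl e => rfl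
      | inr t => rw [hall t] at hx; exact absurd hx hn2
    · intro hl hmem
      have := hl _ hmem
      simp at this
  rw [card_rk_one_mem hall hab hf, hneg, M1_addEdges_left] at hsplit
  omega

lemma card_diag_or {a b : G.V} (hab : a ≠ b) :
    (Finset.univ.filter fun e : G.E =>
      (G.ends e).IsDiag ∨ G.ends e = s(a, b)).card =
    G.numLoops + (Finset.univ.filter fun e : G.E => G.ends e = s(a, b)).card := by
  rw [Finset.filter_or, Finset.card_union_of_disjoint, numLoops_eq_card]
  rw [Finset.disjoint_left]
  intro e he1 he2
  rw [Finset.mem_filter] at he1 he2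
  have h1 := he1.2
  rw [he2.2, Sym2.mk_isDiag_iff] at h1
  exact hab h1

end Count

end Multigraph

/-- the hypotheses of the gluing theorem force `G` and `H` to have
the same number of loops and the same number of edges between corresponding
pairs of distinguished vertices. -/
theorem stmt_7 (G H : Multigraph) {k : ℕ}
    (u : Fin k → G.V) (v : Fin k → H.V)
    (hu : Function.Injective u) (hv : Function.Injective v)
    (h : ∀ S : Finset (Sym2 (Fin k)), (∀ p ∈ S, ¬ p.IsDiag) →
      (G.addEdges {p // p ∈ S} (fun p => Sym2.map u p.1)).tutte =
        (H.addEdges {p // p ∈ S} (fun p => Sym2.map v p.1)).tutte) :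
    G.numLoops = H.numLoops ∧
      ∀ i j : Fin k, i ≠ j →
        Nat.card {e : G.E // G.ends e = s(u i, u j)} =
          Nat.card {e : H.E // H.ends e = s(v i, v j)} := by
  classical
  have h0 := h ∅ (by simp)
  haveI hempty : IsEmpty {p : Sym2 (Fin k) // p ∈ (∅ : Finset (Sym2 (Fin k)))} :=
    ⟨fun t => absurd t.2 (Finset.notMem_empty _)⟩
  have hphi0 : (G.addEdges {p // p ∈ (∅ : Finset (Sym2 (Fin k)))}
      (fun p => Sym2.map u p.1)).phiT =
      (H.addEdges {p // p ∈ (∅ : Finset (Sym2 (Fin k)))}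
      (fun p => Sym2.map v p.1)).phiT := by
    unfold Multigraph.phiT
    rw [h0]
  have hL : G.numLoops = H.numLoops := by
    have h2 := Multigraph.numLoops_eq_of_phiT hphi0
    rwa [Multigraph.numLoops_addEdges_empty hempty,
      Multigraph.numLoops_addEdges_empty hempty] at h2
  refine ⟨hL, ?_⟩
  intro i j hij
  have hM1 : (Finset.univ.filter fun A : Finset G.E => G.rk A = 1).card =
      (Finset.univ.filter fun A : Finset H.E => H.rk A = 1).card := by
    have h2 := Multigraph.M1_eq_of_tutte h0
    rwa [Multigraph.M1_addEdges_empty hempty,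
      Multigraph.M1_addEdges_empty hempty] at h2
  set S : Finset (Sym2 (Fin k)) := {s(i, j)} with hS
  have hSnd : ∀ p ∈ S, ¬ p.IsDiag := by
    intro p hp
    rw [hS, Finset.mem_singleton] at hp
    subst hp
    rw [Sym2.mk_isDiag_iff]
    exact hij
  have h1 := h S hSnd
  have hmem : s(i, j) ∈ S := by rw [hS]; exact Finset.mem_singleton_self _
  have hall : ∀ t : {p : Sym2 (Fin k) // p ∈ S}, t = ⟨s(i, j), hmem⟩ := by
    intro t
    apply Subtype.ext
    exact Finset.mem_singleton.mp t.2
  have habG : u i ≠ u j := fun hc => hij (hu hc)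
  have habH : v i ≠ v j := fun hc => hij (hv hc)
  have hfG : (fun p : {p : Sym2 (Fin k) // p ∈ S} => Sym2.map u p.1)
      ⟨s(i, j), hmem⟩ = s(u i, u j) := Sym2.map_pair_eq u i j
  have hfH : (fun p : {p : Sym2 (Fin k) // p ∈ S} => Sym2.map v p.1)
      ⟨s(i, j), hmem⟩ = s(v i, v j) := Sym2.map_pair_eq v i j
  have hMS := Multigraph.M1_eq_of_tutte h1
  rw [Multigraph.M1_addEdges_split hall habG hfG,
    Multigraph.M1_addEdges_split hall habH hfH, hM1] at hMS
  have hpow : 2 ^ ((Finset.univ.filter fun e : G.E =>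
      (G.ends e).IsDiag ∨ G.ends e = s(u i, u j)).card) =
      2 ^ ((Finset.univ.filter fun e : H.E =>
      (H.ends e).IsDiag ∨ H.ends e = s(v i, v j)).card) := by omega
  rw [Multigraph.card_diag_or habG, Multigraph.card_diag_or habH, hL] at hpow
  have hinj := Nat.pow_right_injective (le_refl 2) hpow
  have hm : (Finset.univ.filter fun e : G.E => G.ends e = s(u i, u j)).card =
      (Finset.univ.filter fun e : H.E => H.ends e = s(v i, v j)).card := by omega
  rw [Nat.card_eq_fintype_card, Fintype.card_subtype,
    Nat.card_eq_fintype_card, Fintype.card_subtype]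
  exact hm
end
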